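/- arXiv:1509.02954 — 5 statements merged into one kernel-verified Lean document; each statement's English description precedes it below -/
import Mathlib

section
/- (Theorem 3.1.) For all real numbers g_1, g_2, g_3, R_max and all nonnegative reals π_1, π_2, π_3, π_4, the depth-two tree empirical risk (R_max − π_1)·𝟙_{g_1≤0}·𝟙_{g_2≤0} + (R_max − π_2)·𝟙_{g_1≤0}·𝟙_{g_2>0} + (R_max − π_3)·𝟙_{g_1>0}·𝟙_{g_3≤0} + (R_max − π_4)·𝟙_{g_1>0}·𝟙_{g_3>0} equals R_max − (π_1+π_2+π_3+π_4) + max[ (π_3+π_4)·𝟙_{g_1≤0} + π_2·𝟙_{g_2≤0}, (π_3+π_4)·𝟙_{g_1≤0} + π_1·𝟙_{g_2>0}, (π_1+π_2)·𝟙_{g_1>0} + π_4·𝟙_{g_3≤0}, (π_1+π_2)·𝟙_{g_1>0} + π_3·𝟙_{g_3>0} ]. -/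
/-- **Theorem 3.1.** The depth-two tree empirical risk equals
`R_max − (π₁+π₂+π₃+π₄)` plus a single maximum over the four leaf terms. -/
theorem depth_two_risk_eq_max_form (g₁ g₂ g₃ Rmax : ℝ) (π₁ π₂ π₃ π₄ : ℝ)
    (h₁ : 0 ≤ π₁) (h₂ : 0 ≤ π₂) (h₃ : 0 ≤ π₃) (h₄ : 0 ≤ π₄) :
    (Rmax - π₁) * (if g₁ ≤ 0 then (1 : ℝ) else 0) * (if g₂ ≤ 0 then (1 : ℝ) else 0)
      + (Rmax - π₂) * (if g₁ ≤ 0 then (1 : ℝ) else 0) * (if 0 < g₂ then (1 : ℝ) else 0)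
      + (Rmax - π₃) * (if 0 < g₁ then (1 : ℝ) else 0) * (if g₃ ≤ 0 then (1 : ℝ) else 0)
      + (Rmax - π₄) * (if 0 < g₁ then (1 : ℝ) else 0) * (if 0 < g₃ then (1 : ℝ) else 0)
    = Rmax - (π₁ + π₂ + π₃ + π₄)
      + max (max ((π₃ + π₄) * (if g₁ ≤ 0 then (1 : ℝ) else 0) + π₂ * (if g₂ ≤ 0 then (1 : ℝ) else 0))
                ((π₃ + π₄) * (if g₁ ≤ 0 then (1 : ℝ) else 0) + π₁ * (if 0 < g₂ then (1 : ℝ) else 0)))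
            (max ((π₁ + π₂) * (if 0 < g₁ then (1 : ℝ) else 0) + π₄ * (if g₃ ≤ 0 then (1 : ℝ) else 0))
                ((π₁ + π₂) * (if 0 < g₁ then (1 : ℝ) else 0) + π₃ * (if 0 < g₃ then (1 : ℝ) else 0))) := by
  rcases le_or_gt g₁ 0 with h|h <;> rcases le_or_gt g₂ 0 with h2|h2 <;>
    rcases le_or_gt g₃ 0 with h3|h3 <;>
    simp [h, h2, h3, not_le.mpr, not_lt.mpr, max_def] <;> split_ifs <;> linarith
end

section
/- Let T be a sensor tree on K leaves with path matrices P, N, let π_1,…,π_K be real savings, and define the weight vectors w_{p,k}, w_{n,k} ∈ ℝ^{K−1} by (w_{p,k})_j = P_{k,j}·Σ_{l : N_{l,j}=1} π_l and (w_{n,k})_j = N_{k,j}·Σ_{l : P_{l,j}=1} π_l. If g = (g_1,…,g_{K−1}) are real decision values and k* is the leaf reached by g (i.e. G_{k*}(g) = 1), then the term of leaf k*, namely Σ_{j=1}^{K−1} (w_{p,k*})_j·𝟙_{g_j>0} + (w_{n,k*})_j·𝟙_{g_j≤0}, equals the total savings lost Σ_{l ≠ k*} π_l. -/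
/-- A full binary tree with leaves labeled by `L` and internal nodes labeled by `I`.
At each internal node, the first child is the negative branch and the second child is the
positive branch. -/
inductive BTree (L I : Type) : Type
  | leaf (k : L) : BTree L I
  | node (j : I) (neg pos : BTree L I) : BTree L I

namespace BTree

variable {L I : Type}

/-- The list of leaf labels of a binary tree. -/
def leaves : BTree L I → List L
  | .leaf k => [k]
  | .node _ t₁ t₂ => t₁.leaves ++ t₂.leaves

/-- The list of internal-node labels of a binary tree. -/
def nodes : BTree L I → List I
  | .leaf _ => []
  | .node j t₁ t₂ => j :: (t₁.nodes ++ t₂.nodes)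

variable [DecidableEq L] [DecidableEq I]

/-- Path matrix `P`: `Pmat T k j = 1` iff internal node `j` lies on the root-to-`k` path
and the path proceeds to the positive child of `j`; it is `0` otherwise. -/
def Pmat : BTree L I → L → I → ℕ
  | .leaf _, _, _ => 0
  | .node j t₁ t₂, k, j' =>
      if k ∈ t₂.leaves then (if j' = j then 1 else 0) + t₂.Pmat k j'
      else if k ∈ t₁.leaves then t₁.Pmat k j'
      else 0

/-- Path matrix `N`: `Nmat T k j = 1` iff internal node `j` lies on the root-to-`k` path
and the path proceeds to the negative child of `j`; it is `0` otherwise. -/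
def Nmat : BTree L I → L → I → ℕ
  | .leaf _, _, _ => 0
  | .node j t₁ t₂, k, j' =>
      if k ∈ t₂.leaves then t₂.Nmat k j'
      else if k ∈ t₁.leaves then (if j' = j then 1 else 0) + t₁.Nmat k j'
      else 0

end BTree

/-- A sensor tree on `K` leaves: a full binary tree whose `K` leaves are labeled bijectively
by `Fin K` and whose `K − 1` internal nodes are labeled bijectively by `Fin (K − 1)`. -/
structure SensorTree (K : ℕ) where
  tree : BTree (Fin K) (Fin (K - 1))
  leaves_nodup : tree.leaves.Nodup
  leaves_complete : ∀ k : Fin K, k ∈ tree.leaves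
  nodes_nodup : tree.nodes.Nodup
  nodes_complete : ∀ j : Fin (K - 1), j ∈ tree.nodes

theorem BTree.elim_of_isEmpty {L I : Type} [IsEmpty L] [IsEmpty I] (t : BTree L I) : False := by
  cases t with
  | leaf k => exact IsEmpty.false k
  | node j _ _ => exact IsEmpty.false j

theorem SensorTree.pos {K : ℕ} (T : SensorTree K) : 0 < K := by
  rcases Nat.eq_zero_or_pos K with h | h
  · subst h
    exact (BTree.elim_of_isEmpty (show BTree (Fin 0) (Fin 0) from T.tree)).elim
  · exact h

theorem SensorTree.univ_nonempty {K : ℕ} (T : SensorTree K) :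
    (Finset.univ : Finset (Fin K)).Nonempty :=
  ⟨⟨0, T.pos⟩, Finset.mem_univ _⟩

/-- The indicator `𝟙_P ∈ {0, 1}` of a proposition `P`, as a real number. -/
noncomputable def ind (P : Prop) [Decidable P] : ℝ := if P then 1 else 0

/-- The leaf state `G_k(g) = ∏_j (𝟙_{g_j>0})^{P_{k,j}} (𝟙_{g_j≤0})^{N_{k,j}}`, indicating
whether the decision values `g` route an example to leaf `k`. -/
noncomputable def leafState {K : ℕ} (T : SensorTree K) (g : Fin (K - 1) → ℝ) (k : Fin K) : ℝ :=
  ∏ j : Fin (K - 1), (ind (0 < g j)) ^ (T.tree.Pmat k j) * (ind (g j ≤ 0)) ^ (T.tree.Nmat k j)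

/-- The weight `(w_{p,k})_j = P_{k,j} · Σ_{l : N_{l,j}=1} π_l`. -/
noncomputable def wp {K : ℕ} (T : SensorTree K) (π : Fin K → ℝ) (k : Fin K)
    (j : Fin (K - 1)) : ℝ :=
  (T.tree.Pmat k j : ℝ) * ∑ l ∈ Finset.univ.filter (fun l => T.tree.Nmat l j = 1), π l

/-- The weight `(w_{n,k})_j = N_{k,j} · Σ_{l : P_{l,j}=1} π_l`. -/
noncomputable def wn {K : ℕ} (T : SensorTree K) (π : Fin K → ℝ) (k : Fin K)
    (j : Fin (K - 1)) : ℝ :=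
  (T.tree.Nmat k j : ℝ) * ∑ l ∈ Finset.univ.filter (fun l => T.tree.Pmat l j = 1), π l


namespace BTree

variable {L I : Type} [DecidableEq L] [DecidableEq I]

theorem Pmat_eq_zero_of_not_node (t : BTree L I) :
    ∀ k j, j ∉ t.nodes → t.Pmat k j = 0 := by
  induction t with
  | leaf k0 => intro k j _; rfl
  | node j0 t1 t2 ih1 ih2 =>
    intro k j hj
    simp only [nodes, List.mem_cons, List.mem_append, not_or] at hj
    simp [Pmat, hj.1, ih1 k j hj.2.1, ih2 k j hj.2.2]

theorem Nmat_eq_zero_of_not_node (t : BTree L I) :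
    ∀ k j, j ∉ t.nodes → t.Nmat k j = 0 := by
  induction t with
  | leaf k0 => intro k j _; rfl
  | node j0 t1 t2 ih1 ih2 =>
    intro k j hj
    simp only [nodes, List.mem_cons, List.mem_append, not_or] at hj
    simp [Nmat, hj.1, ih1 k j hj.2.1, ih2 k j hj.2.2]


theorem main_sum (g : I → ℝ) (π : L → ℝ) (t : BTree L I) :
    t.leaves.Nodup → t.nodes.Nodup → ∀ k : L, k ∈ t.leaves →
    (∀ j, t.Pmat k j = 1 → 0 < g j) → (∀ j, t.Nmat k j = 1 → g j ≤ 0) →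
    ∑ j ∈ t.nodes.toFinset,
      ((t.Pmat k j : ℝ) * (∑ l ∈ t.leaves.toFinset.filter (fun l => t.Nmat l j = 1), π l)
          * ind (0 < g j)
        + (t.Nmat k j : ℝ) * (∑ l ∈ t.leaves.toFinset.filter (fun l => t.Pmat l j = 1), π l)
          * ind (g j ≤ 0))
      = (∑ l ∈ t.leaves.toFinset, π l) - π k := by
  induction t with
  | leaf k0 =>
    intro _ _ k hk _ _
    simp only [leaves, List.mem_singleton] at hk
    subst hk
    simp [nodes, leaves]
  | node j0 t1 t2 ih1 ih2 =>
    intro hln hnn k hk hP hN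
    simp only [leaves, List.nodup_append] at hln
    obtain ⟨hln1, hln2, hldisj⟩ := hln
    replace hldisj : t1.leaves.Disjoint t2.leaves := fun x h1 h2 => hldisj x h1 x h2 rfl
    simp only [nodes, List.nodup_cons, List.mem_append, not_or, List.nodup_append] at hnn
    obtain ⟨⟨hj01, hj02⟩, hnn1, hnn2, hndisj⟩ := hnn
    replace hndisj : t1.nodes.Disjoint t2.nodes := fun x h1 h2 => hndisj x h1 x h2 rfl
    have hnodes : (node j0 t1 t2).nodes.toFinset
        = insert j0 (t1.nodes.toFinset ∪ t2.nodes.toFinset) := by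
      simp [nodes]
    have hleaves : (node j0 t1 t2).leaves.toFinset
        = t1.leaves.toFinset ∪ t2.leaves.toFinset := by
      simp [leaves]
    have hj0mem : j0 ∉ t1.nodes.toFinset ∪ t2.nodes.toFinset := by
      simp [hj01, hj02]
    have hndisjF : Disjoint t1.nodes.toFinset t2.nodes.toFinset :=
      List.disjoint_toFinset_iff_disjoint.mpr hndisj
    have hldisjF : Disjoint t1.leaves.toFinset t2.leaves.toFinset :=
      List.disjoint_toFinset_iff_disjoint.mpr hldisj
    rw [hnodes, Finset.sum_insert hj0mem, Finset.sum_union hndisjF]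
    simp only [leaves, List.mem_append] at hk
    rcases hk with hk | hk
    · -- k in negative (left) subtree
      have hk2 : k ∉ t2.leaves := fun h => hldisj hk h
      have hPk : ∀ j, (node j0 t1 t2).Pmat k j = t1.Pmat k j := by
        intro j; simp [Pmat, hk, hk2]
      have hNk : ∀ j, (node j0 t1 t2).Nmat k j
          = (if j = j0 then 1 else 0) + t1.Nmat k j := by
        intro j; simp [Nmat, hk, hk2]
      -- term at j0
      have e1 : (node j0 t1 t2).Pmat k j0 = 0 := by
        rw [hPk, Pmat_eq_zero_of_not_node t1 k j0 hj01]
      have e2 : (node j0 t1 t2).Nmat k j0 = 1 := by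
        rw [hNk, if_pos rfl, Nmat_eq_zero_of_not_node t1 k j0 hj01]
      have e3 : ind (g j0 ≤ 0) = 1 := by rw [ind, if_pos (hN j0 e2)]
      have e4 : ((node j0 t1 t2).leaves.toFinset.filter
          (fun l => (node j0 t1 t2).Pmat l j0 = 1)) = t2.leaves.toFinset := by
        rw [hleaves, Finset.filter_union]
        have f1 : (t1.leaves.toFinset.filter (fun l => (node j0 t1 t2).Pmat l j0 = 1)) = ∅ := by
          apply Finset.filter_false_of_mem
          intro l hl
          have hl1 : l ∈ t1.leaves := List.mem_toFinset.mp hl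
          have hl2 : l ∉ t2.leaves := fun h => hldisj hl1 h
          simp [Pmat, hl1, hl2, Pmat_eq_zero_of_not_node t1 l j0 hj01]
        have f2 : (t2.leaves.toFinset.filter (fun l => (node j0 t1 t2).Pmat l j0 = 1))
            = t2.leaves.toFinset := by
          apply Finset.filter_true_of_mem
          intro l hl
          have hl2 : l ∈ t2.leaves := List.mem_toFinset.mp hl
          simp [Pmat, hl2, Pmat_eq_zero_of_not_node t2 l j0 hj02]
        rw [f1, f2, Finset.empty_union]
      -- sum over t2 nodes is zero
      have s2 : ∑ j ∈ t2.nodes.toFinset,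
          (((node j0 t1 t2).Pmat k j : ℝ) * (∑ l ∈ (node j0 t1 t2).leaves.toFinset.filter
              (fun l => (node j0 t1 t2).Nmat l j = 1), π l) * ind (0 < g j)
            + ((node j0 t1 t2).Nmat k j : ℝ) * (∑ l ∈ (node j0 t1 t2).leaves.toFinset.filter
              (fun l => (node j0 t1 t2).Pmat l j = 1), π l) * ind (g j ≤ 0)) = 0 := by
        apply Finset.sum_eq_zero
        intro j hj
        have hjm : j ∈ t2.nodes := List.mem_toFinset.mp hj
        have hjn1 : j ∉ t1.nodes := fun h => hndisj h hjm
        have hjne : j ≠ j0 := fun h => hj02 (h ▸ hjm)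
        have z1 : (node j0 t1 t2).Pmat k j = 0 := by
          rw [hPk, Pmat_eq_zero_of_not_node t1 k j hjn1]
        have z2 : (node j0 t1 t2).Nmat k j = 0 := by
          rw [hNk, if_neg hjne, Nmat_eq_zero_of_not_node t1 k j hjn1]
        simp [z1, z2]
      -- sum over t1 nodes matches subtree sum
      have s1 : ∑ j ∈ t1.nodes.toFinset,
          (((node j0 t1 t2).Pmat k j : ℝ) * (∑ l ∈ (node j0 t1 t2).leaves.toFinset.filter
              (fun l => (node j0 t1 t2).Nmat l j = 1), π l) * ind (0 < g j)
            + ((node j0 t1 t2).Nmat k j : ℝ) * (∑ l ∈ (node j0 t1 t2).leaves.toFinset.filter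
              (fun l => (node j0 t1 t2).Pmat l j = 1), π l) * ind (g j ≤ 0))
          = (∑ l ∈ t1.leaves.toFinset, π l) - π k := by
        rw [← ih1 hln1 hnn1 k hk ?_ ?_]
        · apply Finset.sum_congr rfl
          intro j hj
          have hjm : j ∈ t1.nodes := List.mem_toFinset.mp hj
          have hjn2 : j ∉ t2.nodes := fun h => hndisj hjm h
          have hjne : j ≠ j0 := fun h => hj01 (h ▸ hjm)
          have z1 : (node j0 t1 t2).Pmat k j = t1.Pmat k j := hPk j
          have z2 : (node j0 t1 t2).Nmat k j = t1.Nmat k j := by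
            rw [hNk, if_neg hjne, Nat.zero_add]
          have f1 : ((node j0 t1 t2).leaves.toFinset.filter
              (fun l => (node j0 t1 t2).Nmat l j = 1))
              = t1.leaves.toFinset.filter (fun l => t1.Nmat l j = 1) := by
            rw [hleaves, Finset.filter_union]
            have g2 : (t2.leaves.toFinset.filter
                (fun l => (node j0 t1 t2).Nmat l j = 1)) = ∅ := by
              apply Finset.filter_false_of_mem
              intro l hl
              have hl2 : l ∈ t2.leaves := List.mem_toFinset.mp hl
              simp [Nmat, hl2, Nmat_eq_zero_of_not_node t2 l j hjn2]
            have g1 : (t1.leaves.toFinset.filter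
                (fun l => (node j0 t1 t2).Nmat l j = 1))
                = t1.leaves.toFinset.filter (fun l => t1.Nmat l j = 1) := by
              apply Finset.filter_congr
              intro l hl
              have hl1 : l ∈ t1.leaves := List.mem_toFinset.mp hl
              have hl2 : l ∉ t2.leaves := fun h => hldisj hl1 h
              simp [Nmat, hl1, hl2, hjne]
            rw [g1, g2, Finset.union_empty]
          have f2 : ((node j0 t1 t2).leaves.toFinset.filter
              (fun l => (node j0 t1 t2).Pmat l j = 1))
              = t1.leaves.toFinset.filter (fun l => t1.Pmat l j = 1) := by
            rw [hleaves, Finset.filter_union]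
            have g2 : (t2.leaves.toFinset.filter
                (fun l => (node j0 t1 t2).Pmat l j = 1)) = ∅ := by
              apply Finset.filter_false_of_mem
              intro l hl
              have hl2 : l ∈ t2.leaves := List.mem_toFinset.mp hl
              simp [Pmat, hl2, hjne, Pmat_eq_zero_of_not_node t2 l j hjn2]
            have g1 : (t1.leaves.toFinset.filter
                (fun l => (node j0 t1 t2).Pmat l j = 1))
                = t1.leaves.toFinset.filter (fun l => t1.Pmat l j = 1) := by
              apply Finset.filter_congr
              intro l hl
              have hl1 : l ∈ t1.leaves := List.mem_toFinset.mp hl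
              have hl2 : l ∉ t2.leaves := fun h => hldisj hl1 h
              simp [Pmat, hl1, hl2]
            rw [g1, g2, Finset.union_empty]
          rw [z1, z2, f1, f2]
        · intro j h1
          apply hP j
          have hjm : j ∈ t1.nodes := by
            by_contra h
            rw [Pmat_eq_zero_of_not_node t1 k j h] at h1
            exact one_ne_zero h1.symm
          rw [hPk]; exact h1
        · intro j h1
          apply hN j
          have hjm : j ∈ t1.nodes := by
            by_contra h
            rw [Nmat_eq_zero_of_not_node t1 k j h] at h1
            exact one_ne_zero h1.symm
          have hjne : j ≠ j0 := fun h => hj01 (h ▸ hjm)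
          rw [hNk, if_neg hjne, Nat.zero_add]; exact h1
      rw [s1, s2, e1, e2, e3, e4, hleaves,
        Finset.sum_union hldisjF]
      push_cast
      ring
    · -- k in positive (right) subtree
      have hk1 : k ∉ t1.leaves := fun h => hldisj h hk
      have hPk : ∀ j, (node j0 t1 t2).Pmat k j
          = (if j = j0 then 1 else 0) + t2.Pmat k j := by
        intro j; simp [Pmat, hk]
      have hNk : ∀ j, (node j0 t1 t2).Nmat k j = t2.Nmat k j := by
        intro j; simp [Nmat, hk]
      have e1 : (node j0 t1 t2).Pmat k j0 = 1 := by
        rw [hPk, if_pos rfl, Pmat_eq_zero_of_not_node t2 k j0 hj02]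
      have e2 : (node j0 t1 t2).Nmat k j0 = 0 := by
        rw [hNk, Nmat_eq_zero_of_not_node t2 k j0 hj02]
      have e3 : ind (0 < g j0) = 1 := by rw [ind, if_pos (hP j0 e1)]
      have e4 : ((node j0 t1 t2).leaves.toFinset.filter
          (fun l => (node j0 t1 t2).Nmat l j0 = 1)) = t1.leaves.toFinset := by
        rw [hleaves, Finset.filter_union]
        have f2 : (t2.leaves.toFinset.filter (fun l => (node j0 t1 t2).Nmat l j0 = 1)) = ∅ := by
          apply Finset.filter_false_of_mem
          intro l hl
          have hl2 : l ∈ t2.leaves := List.mem_toFinset.mp hl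
          simp [Nmat, hl2, Nmat_eq_zero_of_not_node t2 l j0 hj02]
        have f1 : (t1.leaves.toFinset.filter (fun l => (node j0 t1 t2).Nmat l j0 = 1))
            = t1.leaves.toFinset := by
          apply Finset.filter_true_of_mem
          intro l hl
          have hl1 : l ∈ t1.leaves := List.mem_toFinset.mp hl
          have hl2 : l ∉ t2.leaves := fun h => hldisj hl1 h
          simp [Nmat, hl1, hl2, Nmat_eq_zero_of_not_node t1 l j0 hj01]
        rw [f1, f2, Finset.union_empty]
      have s1 : ∑ j ∈ t1.nodes.toFinset,
          (((node j0 t1 t2).Pmat k j : ℝ) * (∑ l ∈ (node j0 t1 t2).leaves.toFinset.filter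
              (fun l => (node j0 t1 t2).Nmat l j = 1), π l) * ind (0 < g j)
            + ((node j0 t1 t2).Nmat k j : ℝ) * (∑ l ∈ (node j0 t1 t2).leaves.toFinset.filter
              (fun l => (node j0 t1 t2).Pmat l j = 1), π l) * ind (g j ≤ 0)) = 0 := by
        apply Finset.sum_eq_zero
        intro j hj
        have hjm : j ∈ t1.nodes := List.mem_toFinset.mp hj
        have hjn2 : j ∉ t2.nodes := fun h => hndisj hjm h
        have hjne : j ≠ j0 := fun h => hj01 (h ▸ hjm)
        have z1 : (node j0 t1 t2).Pmat k j = 0 := by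
          rw [hPk, if_neg hjne, Pmat_eq_zero_of_not_node t2 k j hjn2]
        have z2 : (node j0 t1 t2).Nmat k j = 0 := by
          rw [hNk, Nmat_eq_zero_of_not_node t2 k j hjn2]
        simp [z1, z2]
      have s2 : ∑ j ∈ t2.nodes.toFinset,
          (((node j0 t1 t2).Pmat k j : ℝ) * (∑ l ∈ (node j0 t1 t2).leaves.toFinset.filter
              (fun l => (node j0 t1 t2).Nmat l j = 1), π l) * ind (0 < g j)
            + ((node j0 t1 t2).Nmat k j : ℝ) * (∑ l ∈ (node j0 t1 t2).leaves.toFinset.filter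
              (fun l => (node j0 t1 t2).Pmat l j = 1), π l) * ind (g j ≤ 0))
          = (∑ l ∈ t2.leaves.toFinset, π l) - π k := by
        rw [← ih2 hln2 hnn2 k hk ?_ ?_]
        · apply Finset.sum_congr rfl
          intro j hj
          have hjm : j ∈ t2.nodes := List.mem_toFinset.mp hj
          have hjn1 : j ∉ t1.nodes := fun h => hndisj h hjm
          have hjne : j ≠ j0 := fun h => hj02 (h ▸ hjm)
          have z1 : (node j0 t1 t2).Pmat k j = t2.Pmat k j := by
            rw [hPk, if_neg hjne, Nat.zero_add]
          have z2 : (node j0 t1 t2).Nmat k j = t2.Nmat k j := hNk j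
          have f1 : ((node j0 t1 t2).leaves.toFinset.filter
              (fun l => (node j0 t1 t2).Nmat l j = 1))
              = t2.leaves.toFinset.filter (fun l => t2.Nmat l j = 1) := by
            rw [hleaves, Finset.filter_union]
            have g1 : (t1.leaves.toFinset.filter
                (fun l => (node j0 t1 t2).Nmat l j = 1)) = ∅ := by
              apply Finset.filter_false_of_mem
              intro l hl
              have hl1 : l ∈ t1.leaves := List.mem_toFinset.mp hl
              have hl2 : l ∉ t2.leaves := fun h => hldisj hl1 h
              simp [Nmat, hl1, hl2, hjne, Nmat_eq_zero_of_not_node t1 l j hjn1]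
            have g2 : (t2.leaves.toFinset.filter
                (fun l => (node j0 t1 t2).Nmat l j = 1))
                = t2.leaves.toFinset.filter (fun l => t2.Nmat l j = 1) := by
              apply Finset.filter_congr
              intro l hl
              have hl2 : l ∈ t2.leaves := List.mem_toFinset.mp hl
              simp [Nmat, hl2]
            rw [g1, g2, Finset.empty_union]
          have f2 : ((node j0 t1 t2).leaves.toFinset.filter
              (fun l => (node j0 t1 t2).Pmat l j = 1))
              = t2.leaves.toFinset.filter (fun l => t2.Pmat l j = 1) := by
            rw [hleaves, Finset.filter_union]
            have g1 : (t1.leaves.toFinset.filter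
                (fun l => (node j0 t1 t2).Pmat l j = 1)) = ∅ := by
              apply Finset.filter_false_of_mem
              intro l hl
              have hl1 : l ∈ t1.leaves := List.mem_toFinset.mp hl
              have hl2 : l ∉ t2.leaves := fun h => hldisj hl1 h
              simp [Pmat, hl1, hl2, Pmat_eq_zero_of_not_node t1 l j hjn1]
            have g2 : (t2.leaves.toFinset.filter
                (fun l => (node j0 t1 t2).Pmat l j = 1))
                = t2.leaves.toFinset.filter (fun l => t2.Pmat l j = 1) := by
              apply Finset.filter_congr
              intro l hl
              have hl2 : l ∈ t2.leaves := List.mem_toFinset.mp hl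
              simp [Pmat, hl2, hjne]
            rw [g1, g2, Finset.empty_union]
          rw [z1, z2, f1, f2]
        · intro j h1
          apply hP j
          have hjm : j ∈ t2.nodes := by
            by_contra h
            rw [Pmat_eq_zero_of_not_node t2 k j h] at h1
            exact one_ne_zero h1.symm
          have hjne : j ≠ j0 := fun h => hj02 (h ▸ hjm)
          rw [hPk, if_neg hjne, Nat.zero_add]; exact h1
        · intro j h1
          apply hN j
          rw [hNk]; exact h1
      rw [s1, s2, e1, e2, e3, e4, hleaves, Finset.sum_union hldisjF]
      push_cast
      ring


end BTree

/-- If `k*` is the leaf reached by the decision values `g`, then the leaf-`k*` term of the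
reformulated risk equals the total savings lost `Σ_{l ≠ k*} π_l`. -/
theorem reached_leaf_term_eq_savings_lost {K : ℕ} (T : SensorTree K) (π : Fin K → ℝ)
    (g : Fin (K - 1) → ℝ) (kstar : Fin K) (hreach : leafState T g kstar = 1) :
    ∑ j : Fin (K - 1), (wp T π kstar j * ind (0 < g j) + wn T π kstar j * ind (g j ≤ 0))
      = ∑ l ∈ Finset.univ.erase kstar, π l := by
  have hfac : ∀ j : Fin (K - 1),
      (ind (0 < g j)) ^ (T.tree.Pmat kstar j) * (ind (g j ≤ 0)) ^ (T.tree.Nmat kstar j) ≠ 0 := by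
    intro j h0
    rw [leafState, Finset.prod_eq_zero (Finset.mem_univ j) h0] at hreach
    exact one_ne_zero hreach.symm
  have hP : ∀ j, T.tree.Pmat kstar j = 1 → 0 < g j := by
    intro j h1
    by_contra hg
    exact hfac j (by rw [h1]; simp [ind, hg])
  have hN : ∀ j, T.tree.Nmat kstar j = 1 → g j ≤ 0 := by
    intro j h1
    by_contra hg
    exact hfac j (by rw [h1]; simp [ind, hg])
  have huL : (Finset.univ : Finset (Fin K)) = T.tree.leaves.toFinset :=
    (Finset.eq_univ_iff_forall.mpr (fun l => List.mem_toFinset.mpr (T.leaves_complete l))).symm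
  have huI : (Finset.univ : Finset (Fin (K - 1))) = T.tree.nodes.toFinset :=
    (Finset.eq_univ_iff_forall.mpr (fun j => List.mem_toFinset.mpr (T.nodes_complete j))).symm
  simp only [wp, wn]
  rw [Finset.sum_erase_eq_sub (Finset.mem_univ kstar), huL, huI]
  exact BTree.main_sum g π T.tree T.leaves_nodup T.nodes_nodup kstar
    (T.leaves_complete kstar) hP hN
end

section
/- Let T be a sensor tree on K leaves with path matrices P, N, let π_1,…,π_K be nonnegative real savings, and define the weight vectors w_{p,k}, w_{n,k} ∈ ℝ^{K−1} by (w_{p,k})_j = P_{k,j}·Σ_{l : N_{l,j}=1} π_l and (w_{n,k})_j = N_{k,j}·Σ_{l : P_{l,j}=1} π_l. If g = (g_1,…,g_{K−1}) are real decision values and k* is the leaf reached by g (i.e. G_{k*}(g) = 1), then for every leaf k, Σ_{j=1}^{K−1} (w_{p,k})_j·𝟙_{g_j>0} + (w_{n,k})_j·𝟙_{g_j≤0} ≤ Σ_{l ≠ k*} π_l; that is, the term of the reached leaf is a maximizer among all K leaf terms. -/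
namespace BTree

variable {L I : Type} [DecidableEq L] [DecidableEq I]

theorem Pmat_node_pos (j : I) (t₁ t₂ : BTree L I) {k : L} (h : k ∈ t₂.leaves) (j' : I) :
    (node j t₁ t₂).Pmat k j' = (if j' = j then 1 else 0) + t₂.Pmat k j' := by
  simp [Pmat, h]

theorem Pmat_node_neg (j : I) (t₁ t₂ : BTree L I) {k : L} (h1 : k ∈ t₁.leaves)
    (h2 : k ∉ t₂.leaves) (j' : I) :
    (node j t₁ t₂).Pmat k j' = t₁.Pmat k j' := by
  simp [Pmat, h1, h2]

theorem Nmat_node_pos (j : I) (t₁ t₂ : BTree L I) {k : L} (h : k ∈ t₂.leaves) (j' : I) :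
    (node j t₁ t₂).Nmat k j' = t₂.Nmat k j' := by
  simp [Nmat, h]

theorem Nmat_node_neg (j : I) (t₁ t₂ : BTree L I) {k : L} (h1 : k ∈ t₁.leaves)
    (h2 : k ∉ t₂.leaves) (j' : I) :
    (node j t₁ t₂).Nmat k j' = (if j' = j then 1 else 0) + t₁.Nmat k j' := by
  simp [Nmat, h1, h2]

theorem Pmat_eq_zero : ∀ (t : BTree L I) (k : L) (j : I), j ∉ t.nodes → t.Pmat k j = 0
  | .leaf _, _, _, _ => rfl
  | .node j' t₁ t₂, k, j, h => by
    simp only [nodes, List.mem_cons, List.mem_append, not_or] at h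
    obtain ⟨hj', h1, h2⟩ := h
    by_cases hk2 : k ∈ t₂.leaves
    · rw [Pmat_node_pos _ _ _ hk2, if_neg hj', Pmat_eq_zero t₂ k j h2]
    · by_cases hk1 : k ∈ t₁.leaves
      · rw [Pmat_node_neg _ _ _ hk1 hk2, Pmat_eq_zero t₁ k j h1]
      · simp [Pmat, hk1, hk2]

theorem Nmat_eq_zero : ∀ (t : BTree L I) (k : L) (j : I), j ∉ t.nodes → t.Nmat k j = 0
  | .leaf _, _, _, _ => rfl
  | .node j' t₁ t₂, k, j, h => by
    simp only [nodes, List.mem_cons, List.mem_append, not_or] at h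
    obtain ⟨hj', h1, h2⟩ := h
    by_cases hk2 : k ∈ t₂.leaves
    · rw [Nmat_node_pos _ _ _ hk2, Nmat_eq_zero t₂ k j h2]
    · by_cases hk1 : k ∈ t₁.leaves
      · rw [Nmat_node_neg _ _ _ hk1 hk2, if_neg hj', Nmat_eq_zero t₁ k j h1]
      · simp [Nmat, hk1, hk2]

theorem nodup_node {j : I} {t₁ t₂ : BTree L I} (h : (node j t₁ t₂).nodes.Nodup) :
    j ∉ t₁.nodes ∧ j ∉ t₂.nodes ∧ t₁.nodes.Nodup ∧ t₂.nodes.Nodup ∧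
      ∀ a ∈ t₁.nodes, a ∉ t₂.nodes := by
  simp only [nodes, List.nodup_cons, List.mem_append, not_or, List.nodup_append] at h
  exact ⟨h.1.1, h.1.2, h.2.1, h.2.2.1, fun a ha hb => h.2.2.2 a ha a hb rfl⟩

theorem Pmat_le_one : ∀ (t : BTree L I), t.nodes.Nodup → ∀ (k : L) (j : I), t.Pmat k j ≤ 1
  | .leaf _, _, _, _ => Nat.zero_le 1
  | .node j' t₁ t₂, hnd, k, j => by
    obtain ⟨hj1, hj2, nd1, nd2, _⟩ := nodup_node hnd
    by_cases hk2 : k ∈ t₂.leaves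
    · rw [Pmat_node_pos _ _ _ hk2]
      by_cases hjj : j = j'
      · subst hjj; rw [if_pos rfl, Pmat_eq_zero t₂ k j hj2]
      · rw [if_neg hjj, Nat.zero_add]; exact Pmat_le_one t₂ nd2 k j
    · by_cases hk1 : k ∈ t₁.leaves
      · rw [Pmat_node_neg _ _ _ hk1 hk2]; exact Pmat_le_one t₁ nd1 k j
      · simp [Pmat, hk1, hk2]

theorem Nmat_le_one : ∀ (t : BTree L I), t.nodes.Nodup → ∀ (k : L) (j : I), t.Nmat k j ≤ 1
  | .leaf _, _, _, _ => Nat.zero_le 1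
  | .node j' t₁ t₂, hnd, k, j => by
    obtain ⟨hj1, hj2, nd1, nd2, _⟩ := nodup_node hnd
    by_cases hk2 : k ∈ t₂.leaves
    · rw [Nmat_node_pos _ _ _ hk2]; exact Nmat_le_one t₂ nd2 k j
    · by_cases hk1 : k ∈ t₁.leaves
      · rw [Nmat_node_neg _ _ _ hk1 hk2]
        by_cases hjj : j = j'
        · subst hjj; rw [if_pos rfl, Nmat_eq_zero t₁ k j hj1]
        · rw [if_neg hjj, Nat.zero_add]; exact Nmat_le_one t₁ nd1 k j
      · simp [Nmat, hk1, hk2]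

theorem Pmat_mul_Nmat_self : ∀ (t : BTree L I), t.nodes.Nodup → ∀ (k : L) (j : I),
    t.Pmat k j * t.Nmat k j = 0
  | .leaf _, _, _, _ => rfl
  | .node j' t₁ t₂, hnd, k, j => by
    obtain ⟨hj1, hj2, nd1, nd2, _⟩ := nodup_node hnd
    by_cases hk2 : k ∈ t₂.leaves
    · rw [Pmat_node_pos _ _ _ hk2, Nmat_node_pos _ _ _ hk2]
      by_cases hjj : j = j'
      · subst hjj; rw [Nmat_eq_zero t₂ k j hj2, Nat.mul_zero]
      · rw [if_neg hjj, Nat.zero_add]; exact Pmat_mul_Nmat_self t₂ nd2 k j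
    · by_cases hk1 : k ∈ t₁.leaves
      · rw [Pmat_node_neg _ _ _ hk1 hk2, Nmat_node_neg _ _ _ hk1 hk2]
        by_cases hjj : j = j'
        · subst hjj; rw [Pmat_eq_zero t₁ k j hj1, Nat.zero_mul]
        · rw [if_neg hjj, Nat.zero_add]; exact Pmat_mul_Nmat_self t₁ nd1 k j
      · simp [Pmat, hk1, hk2]

theorem divergence : ∀ (t : BTree L I), t.nodes.Nodup → t.leaves.Nodup →
    ∀ (k l : L), k ∈ t.leaves → l ∈ t.leaves → k ≠ l →
    ∃ j0 : I, ∀ j, t.Pmat k j * t.Nmat l j + t.Nmat k j * t.Pmat l j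
        = if j = j0 then 1 else 0
  | .leaf a, _, _, k, l, hk, hl, hkl => by
    simp only [leaves, List.mem_singleton] at hk hl
    exact absurd (hk.trans hl.symm) hkl
  | .node j' t₁ t₂, hnd, hld, k, l, hk, hl, hkl => by
    obtain ⟨hj1, hj2, nd1, nd2, ndisj⟩ := nodup_node hnd
    have hld' : t₁.leaves.Nodup ∧ t₂.leaves.Nodup ∧ ∀ a ∈ t₁.leaves, a ∉ t₂.leaves := by
      simp only [leaves, List.nodup_append] at hld
      exact ⟨hld.1, hld.2.1, fun a ha hb => hld.2.2 a ha a hb rfl⟩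
    obtain ⟨ld1, ld2, ldisj⟩ := hld'
    have cross1 : ∀ (a b : L) (j : I), t₂.Pmat a j * t₁.Nmat b j = 0 := by
      intro a b j
      by_cases hj : j ∈ t₁.nodes
      · rw [Pmat_eq_zero t₂ a j (ndisj j hj), Nat.zero_mul]
      · rw [Nmat_eq_zero t₁ b j hj, Nat.mul_zero]
    have cross2 : ∀ (a b : L) (j : I), t₂.Nmat a j * t₁.Pmat b j = 0 := by
      intro a b j
      by_cases hj : j ∈ t₁.nodes
      · rw [Nmat_eq_zero t₂ a j (ndisj j hj), Nat.zero_mul]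
      · rw [Pmat_eq_zero t₁ b j hj, Nat.mul_zero]
    have cross3 : ∀ (a b : L) (j : I), t₁.Pmat a j * t₂.Nmat b j = 0 := by
      intro a b j
      by_cases hj : j ∈ t₁.nodes
      · rw [Nmat_eq_zero t₂ b j (ndisj j hj), Nat.mul_zero]
      · rw [Pmat_eq_zero t₁ a j hj, Nat.zero_mul]
    have cross4 : ∀ (a b : L) (j : I), t₁.Nmat a j * t₂.Pmat b j = 0 := by
      intro a b j
      by_cases hj : j ∈ t₁.nodes
      · rw [Pmat_eq_zero t₂ b j (ndisj j hj), Nat.mul_zero]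
      · rw [Nmat_eq_zero t₁ a j hj, Nat.zero_mul]
    simp only [leaves, List.mem_append] at hk hl
    by_cases hk2 : k ∈ t₂.leaves
    · by_cases hl2 : l ∈ t₂.leaves
      · -- both in t₂
        obtain ⟨j0, hj0⟩ := divergence t₂ nd2 ld2 k l hk2 hl2 hkl
        refine ⟨j0, fun j => ?_⟩
        rw [Pmat_node_pos _ _ _ hk2, Nmat_node_pos _ _ _ hk2,
          Pmat_node_pos _ _ _ hl2, Nmat_node_pos _ _ _ hl2]
        by_cases hjj : j = j'
        · subst hjj
          rw [← hj0 j]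
          simp [Nmat_eq_zero t₂ l j hj2, Nmat_eq_zero t₂ k j hj2]
        · rw [if_neg hjj, Nat.zero_add, Nat.zero_add]; exact hj0 j
      · -- k in t₂, l in t₁
        have hl1 : l ∈ t₁.leaves := hl.resolve_right hl2
        refine ⟨j', fun j => ?_⟩
        rw [Pmat_node_pos _ _ _ hk2, Nmat_node_pos _ _ _ hk2,
          Pmat_node_neg _ _ _ hl1 hl2, Nmat_node_neg _ _ _ hl1 hl2]
        by_cases hjj : j = j'
        · subst hjj
          simp [Pmat_eq_zero t₂ k j hj2, Nmat_eq_zero t₁ l j hj1, Nmat_eq_zero t₂ k j hj2]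
        · simp [hjj, cross1, cross2]
    · have hk1 : k ∈ t₁.leaves := hk.resolve_right hk2
      by_cases hl2 : l ∈ t₂.leaves
      · -- k in t₁, l in t₂
        refine ⟨j', fun j => ?_⟩
        rw [Pmat_node_neg _ _ _ hk1 hk2, Nmat_node_neg _ _ _ hk1 hk2,
          Pmat_node_pos _ _ _ hl2, Nmat_node_pos _ _ _ hl2]
        by_cases hjj : j = j'
        · subst hjj
          simp [Pmat_eq_zero t₁ k j hj1, Nmat_eq_zero t₁ k j hj1, Pmat_eq_zero t₂ l j hj2,
            Nmat_eq_zero t₂ l j hj2]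
        · simp [hjj, cross3, cross4]
      · -- both in t₁
        have hl1 : l ∈ t₁.leaves := hl.resolve_right hl2
        obtain ⟨j0, hj0⟩ := divergence t₁ nd1 ld1 k l hk1 hl1 hkl
        refine ⟨j0, fun j => ?_⟩
        rw [Pmat_node_neg _ _ _ hk1 hk2, Nmat_node_neg _ _ _ hk1 hk2,
          Pmat_node_neg _ _ _ hl1 hl2, Nmat_node_neg _ _ _ hl1 hl2]
        by_cases hjj : j = j'
        · subst hjj
          rw [← hj0 j]
          simp [Pmat_eq_zero t₁ l j hj1, Pmat_eq_zero t₁ k j hj1]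
        · rw [if_neg hjj, Nat.zero_add, Nat.zero_add]; exact hj0 j

end BTree

theorem ind_nonneg (P : Prop) [Decidable P] : 0 ≤ ind P := by
  unfold ind; split <;> norm_num

theorem ind_le_one (P : Prop) [Decidable P] : ind P ≤ 1 := by
  unfold ind; split <;> norm_num

theorem ind_of {P : Prop} [Decidable P] (h : P) : ind P = 1 := if_pos h

theorem ind_of_not {P : Prop} [Decidable P] (h : ¬ P) : ind P = 0 := if_neg h

theorem ind_zero_or_one (P : Prop) [Decidable P] : ind P = 0 ∨ ind P = 1 := by
  unfold ind; split <;> simp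

theorem reach_pos {K : ℕ} (T : SensorTree K) (g : Fin (K - 1) → ℝ) (kstar : Fin K)
    (hreach : leafState T g kstar = 1) (j : Fin (K - 1)) :
    (T.tree.Pmat kstar j ≠ 0 → 0 < g j) ∧ (T.tree.Nmat kstar j ≠ 0 → g j ≤ 0) := by
  have hfac : (ind (0 < g j)) ^ (T.tree.Pmat kstar j) * (ind (g j ≤ 0)) ^ (T.tree.Nmat kstar j)
      = 1 := by
    by_contra hne
    have h01 : ∀ (Q : Prop) [Decidable Q] (n : ℕ), ind Q ^ n = 0 ∨ ind Q ^ n = 1 := by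
      intro Q _ n
      rcases ind_zero_or_one Q with h | h <;> rw [h]
      · rcases Nat.eq_zero_or_pos n with rfl | hn
        · right; exact pow_zero 0
        · left; exact zero_pow (by omega)
      · right; exact one_pow n
    have hzero : (ind (0 < g j)) ^ (T.tree.Pmat kstar j) * (ind (g j ≤ 0)) ^ (T.tree.Nmat kstar j)
        = 0 := by
      rcases h01 (0 < g j) (T.tree.Pmat kstar j) with h | h <;>
        rcases h01 (g j ≤ 0) (T.tree.Nmat kstar j) with h' | h' <;>
        simp [h, h'] at hne ⊢
    have : leafState T g kstar = 0 := by
      unfold leafState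
      exact Finset.prod_eq_zero (Finset.mem_univ j) hzero
    rw [this] at hreach; norm_num at hreach
  have h01 : ∀ (Q : Prop) [Decidable Q] (n : ℕ), ind Q ^ n = 0 ∨ ind Q ^ n = 1 := by
    intro Q _ n
    rcases ind_zero_or_one Q with h | h <;> rw [h]
    · rcases Nat.eq_zero_or_pos n with rfl | hn
      · right; exact pow_zero 0
      · left; exact zero_pow (by omega)
    · right; exact one_pow n
  have hP : (ind (0 < g j)) ^ (T.tree.Pmat kstar j) = 1 := by
    rcases h01 (0 < g j) (T.tree.Pmat kstar j) with h | h
    · rw [h, zero_mul] at hfac; norm_num at hfac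
    · exact h
  have hN : (ind (g j ≤ 0)) ^ (T.tree.Nmat kstar j) = 1 := by
    rcases h01 (g j ≤ 0) (T.tree.Nmat kstar j) with h | h
    · rw [h, mul_zero] at hfac; norm_num at hfac
    · exact h
  constructor
  · intro hne
    by_contra hg
    rw [ind_of_not hg, zero_pow hne] at hP; norm_num at hP
  · intro hne
    by_contra hg
    rw [ind_of_not hg, zero_pow hne] at hN; norm_num at hN

/-- If `k*` is the leaf reached by the decision values `g` and the savings are nonnegative,
then every leaf term of the reformulated risk is at most `Σ_{l ≠ k*} π_l`; that is, the term
of the reached leaf is a maximizer among all `K` leaf terms. -/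
theorem leaf_terms_le_savings_lost {K : ℕ} (T : SensorTree K) (π : Fin K → ℝ)
    (hπ : ∀ l, 0 ≤ π l) (g : Fin (K - 1) → ℝ) (kstar : Fin K)
    (hreach : leafState T g kstar = 1) (k : Fin K) :
    ∑ j : Fin (K - 1), (wp T π k j * ind (0 < g j) + wn T π k j * ind (g j ≤ 0))
      ≤ ∑ l ∈ Finset.univ.erase kstar, π l := by
  classical
  set a : Fin (K - 1) → ℝ := fun j => ind (0 < g j) with ha
  set b : Fin (K - 1) → ℝ := fun j => ind (g j ≤ 0) with hb
  -- rewrite filtered sums as full sums with matrix coefficients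
  have hfiltN : ∀ j : Fin (K - 1),
      ∑ l ∈ Finset.univ.filter (fun l => T.tree.Nmat l j = 1), π l
        = ∑ l, (T.tree.Nmat l j : ℝ) * π l := by
    intro j
    rw [Finset.sum_filter]
    refine Finset.sum_congr rfl fun l _ => ?_
    by_cases h : T.tree.Nmat l j = 1
    · rw [if_pos h, h]; norm_num
    · have h0 : T.tree.Nmat l j = 0 := by
        have := BTree.Nmat_le_one T.tree T.nodes_nodup l j; omega
      rw [if_neg h, h0]; norm_num
  have hfiltP : ∀ j : Fin (K - 1),
      ∑ l ∈ Finset.univ.filter (fun l => T.tree.Pmat l j = 1), π l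
        = ∑ l, (T.tree.Pmat l j : ℝ) * π l := by
    intro j
    rw [Finset.sum_filter]
    refine Finset.sum_congr rfl fun l _ => ?_
    by_cases h : T.tree.Pmat l j = 1
    · rw [if_pos h, h]; norm_num
    · have h0 : T.tree.Pmat l j = 0 := by
        have := BTree.Pmat_le_one T.tree T.nodes_nodup l j; omega
      rw [if_neg h, h0]; norm_num
  have step1 : ∀ j : Fin (K - 1), wp T π k j * a j + wn T π k j * b j
      = ∑ l, ((T.tree.Pmat k j : ℝ) * (T.tree.Nmat l j : ℝ) * a j
          + (T.tree.Nmat k j : ℝ) * (T.tree.Pmat l j : ℝ) * b j) * π l := by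
    intro j
    unfold wp wn
    rw [hfiltN j, hfiltP j, Finset.mul_sum, Finset.mul_sum, Finset.sum_mul, Finset.sum_mul,
      ← Finset.sum_add_distrib]
    refine Finset.sum_congr rfl fun l _ => ?_
    ring
  rw [Finset.sum_congr rfl fun j _ => step1 j, Finset.sum_comm]
  have hLHS : ∀ l : Fin K, ∑ j, ((T.tree.Pmat k j : ℝ) * (T.tree.Nmat l j : ℝ) * a j
          + (T.tree.Nmat k j : ℝ) * (T.tree.Pmat l j : ℝ) * b j) * π l
      = (∑ j, ((T.tree.Pmat k j : ℝ) * (T.tree.Nmat l j : ℝ) * a j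
          + (T.tree.Nmat k j : ℝ) * (T.tree.Pmat l j : ℝ) * b j)) * π l := by
    intro l; rw [Finset.sum_mul]
  rw [Finset.sum_congr rfl fun l _ => hLHS l]
  have hRHS : ∑ l ∈ Finset.univ.erase kstar, π l
      = ∑ l, (if l = kstar then (0:ℝ) else 1) * π l := by
    rw [← Finset.filter_ne', Finset.sum_filter]
    refine Finset.sum_congr rfl fun l _ => ?_
    by_cases h : l = kstar <;> simp [h]
  rw [hRHS]
  refine Finset.sum_le_sum fun l _ => ?_
  refine mul_le_mul_of_nonneg_right ?_ (hπ l)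
  -- per-leaf coefficient bound
  by_cases hlk : l = kstar
  · -- coefficient of π_{k*} is 0
    subst hlk
    rw [if_pos rfl]
    have hz : ∀ j : Fin (K - 1), (T.tree.Pmat k j : ℝ) * (T.tree.Nmat l j : ℝ) * a j
        + (T.tree.Nmat k j : ℝ) * (T.tree.Pmat l j : ℝ) * b j = 0 := by
      intro j
      obtain ⟨hP, hN⟩ := reach_pos T g l hreach j
      have h1 : (T.tree.Nmat l j : ℝ) * a j = 0 := by
        by_cases h : T.tree.Nmat l j = 0
        · rw [h]; norm_num
        · have : a j = 0 := ind_of_not (not_lt.mpr (hN h))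
          rw [this, mul_zero]
      have h2 : (T.tree.Pmat l j : ℝ) * b j = 0 := by
        by_cases h : T.tree.Pmat l j = 0
        · rw [h]; norm_num
        · have : b j = 0 := ind_of_not (not_le.mpr (hP h))
          rw [this, mul_zero]
      calc (T.tree.Pmat k j : ℝ) * (T.tree.Nmat l j : ℝ) * a j
            + (T.tree.Nmat k j : ℝ) * (T.tree.Pmat l j : ℝ) * b j
          = (T.tree.Pmat k j : ℝ) * ((T.tree.Nmat l j : ℝ) * a j)
            + (T.tree.Nmat k j : ℝ) * ((T.tree.Pmat l j : ℝ) * b j) := by ring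
        _ = 0 := by rw [h1, h2]; ring
    rw [Finset.sum_congr rfl fun j _ => hz j]
    simp
  · rw [if_neg hlk]
    by_cases hlk' : l = k
    · -- l = k ≠ k*: coefficient is 0 ≤ 1
      subst hlk'
      have hz : ∀ j : Fin (K - 1), (T.tree.Pmat l j : ℝ) * (T.tree.Nmat l j : ℝ) * a j
          + (T.tree.Nmat l j : ℝ) * (T.tree.Pmat l j : ℝ) * b j = 0 := by
        intro j
        have h0 : T.tree.Pmat l j * T.tree.Nmat l j = 0 :=
          BTree.Pmat_mul_Nmat_self T.tree T.nodes_nodup l j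
        rcases Nat.mul_eq_zero.mp h0 with h | h <;> rw [h] <;> push_cast <;> ring
      rw [Finset.sum_congr rfl fun j _ => hz j]
      simp
    · -- l ≠ k, l ≠ k*: coefficient ≤ 1 via divergence
      obtain ⟨j0, hj0⟩ := BTree.divergence T.tree T.nodes_nodup T.leaves_nodup k l
        (T.leaves_complete k) (T.leaves_complete l) (fun h => hlk' h.symm)
      calc ∑ j, ((T.tree.Pmat k j : ℝ) * (T.tree.Nmat l j : ℝ) * a j
              + (T.tree.Nmat k j : ℝ) * (T.tree.Pmat l j : ℝ) * b j)
          ≤ ∑ j, ((T.tree.Pmat k j * T.tree.Nmat l j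
              + T.tree.Nmat k j * T.tree.Pmat l j : ℕ) : ℝ) := by
            refine Finset.sum_le_sum fun j _ => ?_
            push_cast
            have t1 : (T.tree.Pmat k j : ℝ) * (T.tree.Nmat l j : ℝ) * a j
                ≤ (T.tree.Pmat k j : ℝ) * (T.tree.Nmat l j : ℝ) :=
              mul_le_of_le_one_right (by positivity) (ind_le_one _)
            have t2 : (T.tree.Nmat k j : ℝ) * (T.tree.Pmat l j : ℝ) * b j
                ≤ (T.tree.Nmat k j : ℝ) * (T.tree.Pmat l j : ℝ) :=
              mul_le_of_le_one_right (by positivity) (ind_le_one _)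
            linarith
        _ = ∑ j, (if j = j0 then (1:ℝ) else 0) := by
            refine Finset.sum_congr rfl fun j _ => ?_
            rw [hj0 j]
            by_cases h : j = j0 <;> simp [h]
        _ = 1 := by rw [Finset.sum_ite_eq' Finset.univ j0 (fun _ => (1:ℝ))]; simp
end

section
/- (Corollary 3.2.) Let T be a sensor tree on K leaves with path matrices P, N, let R_max be a real number, let π_1,…,π_K be nonnegative real savings, and define the weight vectors w_{p,k}, w_{n,k} ∈ ℝ^{K−1} by (w_{p,k})_j = P_{k,j}·Σ_{l : N_{l,j}=1} π_l and (w_{n,k})_j = N_{k,j}·Σ_{l : P_{l,j}=1} π_l. Then for all real decision values g = (g_1,…,g_{K−1}), the empirical tree risk Σ_{k=1}^{K} (R_max − π_k)·G_k(g) equals R_max − Σ_{k=1}^{K} π_k + max_{k ∈ {1,…,K}} [ Σ_{j=1}^{K−1} (w_{p,k})_j·𝟙_{g_j>0} + (w_{n,k})_j·𝟙_{g_j≤0} ]. -/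
section Aux

namespace BTree

variable {L I : Type} [DecidableEq L] [DecidableEq I]

/-- The leaf selected by decision values `g`. -/
noncomputable def route (g : I → ℝ) : BTree L I → L
  | .leaf k => k
  | .node j t₁ t₂ => if 0 < g j then t₂.route g else t₁.route g

theorem route_mem (g : I → ℝ) (t : BTree L I) : t.route g ∈ t.leaves := by
  induction t with
  | leaf k => simp [route, leaves]
  | node j t₁ t₂ ih₁ ih₂ =>
    simp only [route, leaves, List.mem_append]
    split
    · exact Or.inr ih₂
    · exact Or.inl ih₁

theorem mat_eq_zero (t : BTree L I) (k : L) (j : I) (h : j ∉ t.nodes) :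
    t.Pmat k j = 0 ∧ t.Nmat k j = 0 := by
  induction t with
  | leaf k' => simp [Pmat, Nmat]
  | node j' t₁ t₂ ih₁ ih₂ =>
    simp only [nodes, List.mem_cons, List.mem_append] at h
    push_neg at h
    obtain ⟨hj', h1, h2⟩ := h
    simp only [Pmat, Nmat]
    constructor <;> split_ifs <;>
      simp [(ih₁ h1).1, (ih₁ h1).2, (ih₂ h2).1, (ih₂ h2).2, hj']

theorem route_Pmat_pos (g : I → ℝ) (t : BTree L I) (hl : t.leaves.Nodup) (j : I)
    (h : t.Pmat (t.route g) j ≠ 0) : 0 < g j := by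
  induction t with
  | leaf k => simp [Pmat, route] at h
  | node j' t₁ t₂ ih₁ ih₂ =>
    rw [leaves, List.nodup_append] at hl
    obtain ⟨hl₁, hl₂, hdisj⟩ := hl
    by_cases hg : 0 < g j'
    · have hm : t₂.route g ∈ t₂.leaves := route_mem g t₂
      rw [show (BTree.node j' t₁ t₂).route g = t₂.route g by simp [route, hg],
        Pmat, if_pos hm] at h
      by_cases hjj : j = j'
      · exact hjj ▸ hg
      · exact ih₂ hl₂ (by simpa [hjj] using h)
    · have hm1 : t₁.route g ∈ t₁.leaves := route_mem g t₁
      have hm2 : t₁.route g ∉ t₂.leaves := fun h => hdisj _ hm1 _ h rfl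
      rw [show (BTree.node j' t₁ t₂).route g = t₁.route g by simp [route, hg],
        Pmat, if_neg hm2, if_pos hm1] at h
      exact ih₁ hl₁ h

theorem route_Nmat_nonpos (g : I → ℝ) (t : BTree L I) (hl : t.leaves.Nodup) (j : I)
    (h : t.Nmat (t.route g) j ≠ 0) : g j ≤ 0 := by
  induction t with
  | leaf k => simp [Nmat, route] at h
  | node j' t₁ t₂ ih₁ ih₂ =>
    rw [leaves, List.nodup_append] at hl
    obtain ⟨hl₁, hl₂, hdisj⟩ := hl
    by_cases hg : 0 < g j'
    · have hm : t₂.route g ∈ t₂.leaves := route_mem g t₂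
      rw [show (BTree.node j' t₁ t₂).route g = t₂.route g by simp [route, hg],
        Nmat, if_pos hm] at h
      exact ih₂ hl₂ h
    · have hm1 : t₁.route g ∈ t₁.leaves := route_mem g t₁
      have hm2 : t₁.route g ∉ t₂.leaves := fun h => hdisj _ hm1 _ h rfl
      rw [show (BTree.node j' t₁ t₂).route g = t₁.route g by simp [route, hg],
        Nmat, if_neg hm2, if_pos hm1] at h
      by_cases hjj : j = j'
      · exact hjj ▸ le_of_not_gt hg
      · exact ih₁ hl₁ (by simpa [hjj] using h)

theorem Pmat_mul_Nmat (t : BTree L I) (hn : t.nodes.Nodup) (k : L) (j : I) :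
    t.Pmat k j * t.Nmat k j = 0 := by
  induction t with
  | leaf k' => simp [Pmat, Nmat]
  | node j' t₁ t₂ ih₁ ih₂ =>
    rw [nodes, List.nodup_cons, List.nodup_append] at hn
    obtain ⟨hj', hn₁, hn₂, hndisj⟩ := hn
    have hj'1 : j' ∉ t₁.nodes := fun h => hj' (by simp [nodes, List.mem_append, h])
    have hj'2 : j' ∉ t₂.nodes := fun h => hj' (by simp [nodes, List.mem_append, h])
    by_cases h2 : k ∈ t₂.leaves
    · rw [Pmat, Nmat, if_pos h2, if_pos h2]
      by_cases hjj : j = j'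
      · subst hjj
        simp [(mat_eq_zero t₂ k j hj'2).2]
      · rw [if_neg hjj, zero_add]
        exact ih₂ hn₂
    · by_cases h1 : k ∈ t₁.leaves
      · rw [Pmat, Nmat, if_neg h2, if_neg h2, if_pos h1, if_pos h1]
        by_cases hjj : j = j'
        · subst hjj
          simp [(mat_eq_zero t₁ k j hj'1).1]
        · rw [if_neg hjj, zero_add]
          exact ih₁ hn₁
      · rw [Pmat, if_neg h2, if_neg h1, zero_mul]

theorem prod_leafState (g : I → ℝ) (t : BTree L I) (hl : t.leaves.Nodup) (hn : t.nodes.Nodup)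
    (s : Finset I) (hs : ∀ j ∈ t.nodes, j ∈ s) (k : L) (hk : k ∈ t.leaves) :
    ∏ j ∈ s, ind (0 < g j) ^ t.Pmat k j * ind (g j ≤ 0) ^ t.Nmat k j
      = if k = t.route g then 1 else 0 := by
  induction t generalizing s with
  | leaf k' =>
    simp only [leaves, List.mem_singleton] at hk
    subst hk
    simp [Pmat, Nmat, route]
  | node j' t₁ t₂ ih₁ ih₂ =>
    rw [leaves, List.nodup_append] at hl
    obtain ⟨hl₁, hl₂, hdisj⟩ := hl
    rw [nodes, List.nodup_cons, List.nodup_append] at hn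
    obtain ⟨hj', hn₁, hn₂, hndisj⟩ := hn
    have hj'1 : j' ∉ t₁.nodes := fun h => hj' (by simp [nodes, List.mem_append, h])
    have hj'2 : j' ∉ t₂.nodes := fun h => hj' (by simp [nodes, List.mem_append, h])
    have hj's : j' ∈ s := hs j' (by simp [nodes])
    have hs₁ : ∀ j ∈ t₁.nodes, j ∈ s.erase j' :=
      fun j hj => Finset.mem_erase.2 ⟨fun he => hj'1 (he ▸ hj), hs j (by simp [nodes, hj])⟩
    have hs₂ : ∀ j ∈ t₂.nodes, j ∈ s.erase j' :=
      fun j hj => Finset.mem_erase.2 ⟨fun he => hj'2 (he ▸ hj), hs j (by simp [nodes, hj])⟩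
    rw [leaves, List.mem_append] at hk
    rcases hk with hk1 | hk2
    · -- k in negative subtree
      have hk2' : k ∉ t₂.leaves := fun h => hdisj _ hk1 _ h rfl
      rw [← Finset.mul_prod_erase s _ hj's]
      have hfac : ∀ j ∈ s.erase j',
          ind (0 < g j) ^ (BTree.node j' t₁ t₂).Pmat k j
            * ind (g j ≤ 0) ^ (BTree.node j' t₁ t₂).Nmat k j
          = ind (0 < g j) ^ t₁.Pmat k j * ind (g j ≤ 0) ^ t₁.Nmat k j := by
        intro j hj
        have hjj : j ≠ j' := Finset.ne_of_mem_erase hj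
        simp [Pmat, Nmat, hk1, hk2', hjj]
      rw [Finset.prod_congr rfl hfac, ih₁ hl₁ hn₁ (s.erase j') hs₁ hk1]
      have hroot : ind (0 < g j') ^ (BTree.node j' t₁ t₂).Pmat k j'
            * ind (g j' ≤ 0) ^ (BTree.node j' t₁ t₂).Nmat k j' = ind (g j' ≤ 0) := by
        simp [Pmat, Nmat, hk1, hk2', (mat_eq_zero t₁ k j' hj'1).1,
          (mat_eq_zero t₁ k j' hj'1).2]
      rw [hroot]
      by_cases hg : 0 < g j'
      · have : k ≠ (BTree.node j' t₁ t₂).route g := by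
          rw [show (BTree.node j' t₁ t₂).route g = t₂.route g by simp [route, hg]]
          exact fun he => hk2' (he ▸ route_mem g t₂)
        simp [ind, not_le.2 hg, this]
      · rw [show (BTree.node j' t₁ t₂).route g = t₁.route g by simp [route, hg]]
        simp [ind, le_of_not_gt hg]
    · -- k in positive subtree
      rw [← Finset.mul_prod_erase s _ hj's]
      have hfac : ∀ j ∈ s.erase j',
          ind (0 < g j) ^ (BTree.node j' t₁ t₂).Pmat k j
            * ind (g j ≤ 0) ^ (BTree.node j' t₁ t₂).Nmat k j
          = ind (0 < g j) ^ t₂.Pmat k j * ind (g j ≤ 0) ^ t₂.Nmat k j := by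
        intro j hj
        have hjj : j ≠ j' := Finset.ne_of_mem_erase hj
        simp [Pmat, Nmat, hk2, hjj]
      rw [Finset.prod_congr rfl hfac, ih₂ hl₂ hn₂ (s.erase j') hs₂ hk2]
      have hroot : ind (0 < g j') ^ (BTree.node j' t₁ t₂).Pmat k j'
            * ind (g j' ≤ 0) ^ (BTree.node j' t₁ t₂).Nmat k j' = ind (0 < g j') := by
        simp [Pmat, Nmat, hk2, (mat_eq_zero t₂ k j' hj'2).1, (mat_eq_zero t₂ k j' hj'2).2]
      rw [hroot]
      by_cases hg : 0 < g j'
      · rw [show (BTree.node j' t₁ t₂).route g = t₂.route g by simp [route, hg]]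
        simp [ind, hg]
      · have : k ≠ (BTree.node j' t₁ t₂).route g := by
          rw [show (BTree.node j' t₁ t₂).route g = t₁.route g by simp [route, hg]]
          exact fun he => hdisj k (he ▸ route_mem g t₁) k hk2 rfl
        simp [ind, hg, this]

theorem diverge (t : BTree L I) (hl : t.leaves.Nodup) (hn : t.nodes.Nodup)
    (s : Finset I) (hs : ∀ j ∈ t.nodes, j ∈ s) (k l : L) (hk : k ∈ t.leaves)
    (hl' : l ∈ t.leaves) (hkl : k ≠ l) :
    ∑ j ∈ s, (t.Pmat k j * (if t.Nmat l j = 1 then 1 else 0)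
      + t.Nmat k j * (if t.Pmat l j = 1 then 1 else 0)) = 1 := by
  induction t generalizing s with
  | leaf k' =>
    simp only [leaves, List.mem_singleton] at hk hl'
    exact absurd (hk.trans hl'.symm) hkl
  | node j' t₁ t₂ ih₁ ih₂ =>
    rw [leaves, List.nodup_append] at hl
    obtain ⟨hl₁, hl₂, hdisj⟩ := hl
    rw [nodes, List.nodup_cons, List.nodup_append] at hn
    obtain ⟨hj', hn₁, hn₂, hndisj⟩ := hn
    have hj'1 : j' ∉ t₁.nodes := fun h => hj' (by simp [nodes, List.mem_append, h])
    have hj'2 : j' ∉ t₂.nodes := fun h => hj' (by simp [nodes, List.mem_append, h])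
    have hj's : j' ∈ s := hs j' (by simp [nodes])
    have hs₁ : ∀ j ∈ t₁.nodes, j ∈ s.erase j' :=
      fun j hj => Finset.mem_erase.2 ⟨fun he => hj'1 (he ▸ hj), hs j (by simp [nodes, hj])⟩
    have hs₂ : ∀ j ∈ t₂.nodes, j ∈ s.erase j' :=
      fun j hj => Finset.mem_erase.2 ⟨fun he => hj'2 (he ▸ hj), hs j (by simp [nodes, hj])⟩
    rw [leaves, List.mem_append] at hk hl'
    rw [← Finset.add_sum_erase s _ hj's]
    rcases hk with hk1 | hk2 <;> rcases hl' with hll1 | hll2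
    · -- both in negative subtree
      have hk2' : k ∉ t₂.leaves := fun h => hdisj _ hk1 _ h rfl
      have hll2' : l ∉ t₂.leaves := fun h => hdisj _ hll1 _ h rfl
      have hroot : (BTree.node j' t₁ t₂).Pmat k j'
            * (if (BTree.node j' t₁ t₂).Nmat l j' = 1 then 1 else 0)
          + (BTree.node j' t₁ t₂).Nmat k j'
            * (if (BTree.node j' t₁ t₂).Pmat l j' = 1 then 1 else 0) = 0 := by
        simp [Pmat, Nmat, hk1, hk2', hll1, hll2', (mat_eq_zero t₁ k j' hj'1).1,
          (mat_eq_zero t₁ l j' hj'1).1]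
      rw [hroot, zero_add]
      have hcongr : ∀ j ∈ s.erase j',
          (BTree.node j' t₁ t₂).Pmat k j * (if (BTree.node j' t₁ t₂).Nmat l j = 1 then 1 else 0)
            + (BTree.node j' t₁ t₂).Nmat k j
              * (if (BTree.node j' t₁ t₂).Pmat l j = 1 then 1 else 0)
          = t₁.Pmat k j * (if t₁.Nmat l j = 1 then 1 else 0)
            + t₁.Nmat k j * (if t₁.Pmat l j = 1 then 1 else 0) := by
        intro j hj
        have hjj : j ≠ j' := Finset.ne_of_mem_erase hj
        simp [Pmat, Nmat, hk1, hk2', hll1, hll2', hjj]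
      rw [Finset.sum_congr rfl hcongr]
      exact ih₁ hl₁ hn₁ (s.erase j') hs₁ hk1 hll1
    · -- k negative, l positive
      have hk2' : k ∉ t₂.leaves := fun h => hdisj _ hk1 _ h rfl
      have hroot : (BTree.node j' t₁ t₂).Pmat k j'
            * (if (BTree.node j' t₁ t₂).Nmat l j' = 1 then 1 else 0)
          + (BTree.node j' t₁ t₂).Nmat k j'
            * (if (BTree.node j' t₁ t₂).Pmat l j' = 1 then 1 else 0) = 1 := by
        simp [Pmat, Nmat, hk1, hk2', hll2, (mat_eq_zero t₁ k j' hj'1).1,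
          (mat_eq_zero t₁ k j' hj'1).2, (mat_eq_zero t₂ l j' hj'2).1,
          (mat_eq_zero t₂ l j' hj'2).2]
      rw [hroot]
      have hzero : ∀ j ∈ s.erase j',
          (BTree.node j' t₁ t₂).Pmat k j * (if (BTree.node j' t₁ t₂).Nmat l j = 1 then 1 else 0)
            + (BTree.node j' t₁ t₂).Nmat k j
              * (if (BTree.node j' t₁ t₂).Pmat l j = 1 then 1 else 0) = 0 := by
        intro j hj
        have hjj : j ≠ j' := Finset.ne_of_mem_erase hj
        have hsimp : (BTree.node j' t₁ t₂).Pmat k j = t₁.Pmat k j ∧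
            (BTree.node j' t₁ t₂).Nmat k j = t₁.Nmat k j ∧
            (BTree.node j' t₁ t₂).Pmat l j = t₂.Pmat l j ∧
            (BTree.node j' t₁ t₂).Nmat l j = t₂.Nmat l j := by
          refine ⟨?_, ?_, ?_, ?_⟩ <;> simp [Pmat, Nmat, hk1, hk2', hll2, hjj]
        obtain ⟨e1, e2, e3, e4⟩ := hsimp
        rw [e1, e2, e3, e4]
        by_cases hj1 : j ∈ t₁.nodes
        · have hj2 : j ∉ t₂.nodes := fun h => hndisj _ hj1 _ h rfl
          simp [(mat_eq_zero t₂ l j hj2).1, (mat_eq_zero t₂ l j hj2).2]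
        · simp [(mat_eq_zero t₁ k j hj1).1, (mat_eq_zero t₁ k j hj1).2]
      rw [Finset.sum_eq_zero hzero]
      rfl
    · -- k positive, l negative
      have hll2' : l ∉ t₂.leaves := fun h => hdisj _ hll1 _ h rfl
      have hroot : (BTree.node j' t₁ t₂).Pmat k j'
            * (if (BTree.node j' t₁ t₂).Nmat l j' = 1 then 1 else 0)
          + (BTree.node j' t₁ t₂).Nmat k j'
            * (if (BTree.node j' t₁ t₂).Pmat l j' = 1 then 1 else 0) = 1 := by
        simp [Pmat, Nmat, hk2, hll1, hll2', (mat_eq_zero t₂ k j' hj'2).1,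
          (mat_eq_zero t₂ k j' hj'2).2, (mat_eq_zero t₁ l j' hj'1).1,
          (mat_eq_zero t₁ l j' hj'1).2]
      rw [hroot]
      have hzero : ∀ j ∈ s.erase j',
          (BTree.node j' t₁ t₂).Pmat k j * (if (BTree.node j' t₁ t₂).Nmat l j = 1 then 1 else 0)
            + (BTree.node j' t₁ t₂).Nmat k j
              * (if (BTree.node j' t₁ t₂).Pmat l j = 1 then 1 else 0) = 0 := by
        intro j hj
        have hjj : j ≠ j' := Finset.ne_of_mem_erase hj
        have e1 : (BTree.node j' t₁ t₂).Pmat k j = t₂.Pmat k j := by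
          simp [Pmat, hk2, hjj]
        have e2 : (BTree.node j' t₁ t₂).Nmat k j = t₂.Nmat k j := by
          simp [Nmat, hk2]
        have e3 : (BTree.node j' t₁ t₂).Pmat l j = t₁.Pmat l j := by
          simp [Pmat, hll1, hll2']
        have e4 : (BTree.node j' t₁ t₂).Nmat l j = t₁.Nmat l j := by
          simp [Nmat, hll1, hll2', hjj]
        rw [e1, e2, e3, e4]
        by_cases hj1 : j ∈ t₁.nodes
        · have hj2 : j ∉ t₂.nodes := fun h => hndisj _ hj1 _ h rfl
          simp [(mat_eq_zero t₂ k j hj2).1, (mat_eq_zero t₂ k j hj2).2]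
        · simp [(mat_eq_zero t₁ l j hj1).1, (mat_eq_zero t₁ l j hj1).2]
      rw [Finset.sum_eq_zero hzero]
      rfl
    · -- both in positive subtree
      have hroot : (BTree.node j' t₁ t₂).Pmat k j'
            * (if (BTree.node j' t₁ t₂).Nmat l j' = 1 then 1 else 0)
          + (BTree.node j' t₁ t₂).Nmat k j'
            * (if (BTree.node j' t₁ t₂).Pmat l j' = 1 then 1 else 0) = 0 := by
        simp [Pmat, Nmat, hk2, hll2, (mat_eq_zero t₂ k j' hj'2).2,
          (mat_eq_zero t₂ l j' hj'2).2, (mat_eq_zero t₂ l j' hj'2).1]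
      rw [hroot, zero_add]
      have hcongr : ∀ j ∈ s.erase j',
          (BTree.node j' t₁ t₂).Pmat k j * (if (BTree.node j' t₁ t₂).Nmat l j = 1 then 1 else 0)
            + (BTree.node j' t₁ t₂).Nmat k j
              * (if (BTree.node j' t₁ t₂).Pmat l j = 1 then 1 else 0)
          = t₂.Pmat k j * (if t₂.Nmat l j = 1 then 1 else 0)
            + t₂.Nmat k j * (if t₂.Pmat l j = 1 then 1 else 0) := by
        intro j hj
        have hjj : j ≠ j' := Finset.ne_of_mem_erase hj
        simp [Pmat, Nmat, hk2, hll2, hjj]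
      rw [Finset.sum_congr rfl hcongr]
      exact ih₂ hl₂ hn₂ (s.erase j') hs₂ hk2 hll2

end BTree

end Aux

/-- **Corollary 3.2.** The empirical tree risk `Σ_k (R_max − π_k)·G_k(g)` equals
`R_max − Σ_k π_k` plus the maximum over leaves of the weighted indicator terms. -/
theorem tree_risk_eq_max_form {K : ℕ} (T : SensorTree K) (Rmax : ℝ) (π : Fin K → ℝ)
    (hπ : ∀ k, 0 ≤ π k) (g : Fin (K - 1) → ℝ) :
    ∑ k : Fin K, (Rmax - π k) * leafState T g k
      = Rmax - ∑ k : Fin K, π k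
        + Finset.univ.sup' T.univ_nonempty
            (fun k => ∑ j : Fin (K - 1),
              (wp T π k j * ind (0 < g j) + wn T π k j * ind (g j ≤ 0))) := by
  classical
  set t := T.tree with ht
  have hl : t.leaves.Nodup := T.leaves_nodup
  have hn : t.nodes.Nodup := T.nodes_nodup
  set κ : Fin K := t.route g with hκ
  have hκmem : ∀ k : Fin K, k ∈ t.leaves := T.leaves_complete
  -- the leaf state is the indicator of the routed leaf
  have hG : ∀ k, leafState T g k = if k = κ then 1 else 0 := fun k =>
    BTree.prod_leafState g t hl hn Finset.univ (fun j _ => Finset.mem_univ j) k (hκmem k)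
  -- the pointwise summand
  set F : Fin K → Fin K → Fin (K - 1) → ℝ := fun k l j =>
    (t.Pmat k j : ℝ) * ind (0 < g j) * (if t.Nmat l j = 1 then π l else 0)
      + (t.Nmat k j : ℝ) * ind (g j ≤ 0) * (if t.Pmat l j = 1 then π l else 0) with hF
  have key : ∀ k j, wp T π k j * ind (0 < g j) + wn T π k j * ind (g j ≤ 0)
      = ∑ l : Fin K, F k l j := by
    intro k j
    simp only [hF]
    rw [Finset.sum_add_distrib, ← Finset.mul_sum, ← Finset.mul_sum,
      ← Finset.sum_filter, ← Finset.sum_filter, wp, wn]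
    ring
  have hS : ∀ k, (∑ j : Fin (K - 1),
      (wp T π k j * ind (0 < g j) + wn T π k j * ind (g j ≤ 0)))
      = ∑ l : Fin K, ∑ j : Fin (K - 1), F k l j := by
    intro k
    rw [Finset.sum_comm]
    exact Finset.sum_congr rfl fun j _ => key k j
  -- the routed-leaf column vanishes
  have hB0 : ∀ k, ∑ j : Fin (K - 1), F k κ j = 0 := by
    intro k
    refine Finset.sum_eq_zero fun j _ => ?_
    simp only [hF]
    have h1 : (t.Pmat k j : ℝ) * ind (0 < g j) * (if t.Nmat κ j = 1 then π κ else 0) = 0 := by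
      by_cases h : t.Nmat κ j = 1
      · have : g j ≤ 0 := BTree.route_Nmat_nonpos g t hl j (by rw [h]; exact one_ne_zero)
        simp [ind, not_lt.2 this]
      · simp [h]
    have h2 : (t.Nmat k j : ℝ) * ind (g j ≤ 0) * (if t.Pmat κ j = 1 then π κ else 0) = 0 := by
      by_cases h : t.Pmat κ j = 1
      · have : 0 < g j := BTree.route_Pmat_pos g t hl j (by rw [h]; exact one_ne_zero)
        simp [ind, not_le.2 this]
      · simp [h]
    rw [h1, h2, add_zero]
  -- the routed leaf collects all other savings
  have hB : ∀ l, (∑ j : Fin (K - 1), F κ l j) = if l = κ then 0 else π l := by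
    intro l
    by_cases hlκ : l = κ
    · rw [if_pos hlκ, hlκ]
      exact hB0 κ
    · rw [if_neg hlκ]
      have hpt : ∀ j, F κ l j = π l * ((t.Pmat κ j * (if t.Nmat l j = 1 then 1 else 0)
          + t.Nmat κ j * (if t.Pmat l j = 1 then 1 else 0) : ℕ) : ℝ) := by
        intro j
        simp only [hF]
        have e1 : (t.Pmat κ j : ℝ) * ind (0 < g j) * (if t.Nmat l j = 1 then π l else 0)
            = π l * ((t.Pmat κ j * (if t.Nmat l j = 1 then 1 else 0) : ℕ) : ℝ) := by
          by_cases hp : t.Pmat κ j = 0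
          · simp [hp]
          · have : 0 < g j := BTree.route_Pmat_pos g t hl j hp
            by_cases hq : t.Nmat l j = 1 <;> simp [ind, this, hq] <;> ring
        have e2 : (t.Nmat κ j : ℝ) * ind (g j ≤ 0) * (if t.Pmat l j = 1 then π l else 0)
            = π l * ((t.Nmat κ j * (if t.Pmat l j = 1 then 1 else 0) : ℕ) : ℝ) := by
          by_cases hp : t.Nmat κ j = 0
          · simp [hp]
          · have : g j ≤ 0 := BTree.route_Nmat_nonpos g t hl j hp
            by_cases hq : t.Pmat l j = 1 <;> simp [ind, this, not_lt.2 this, hq] <;> ring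
        rw [e1, e2]
        push_cast
        ring
      rw [Finset.sum_congr rfl fun j _ => hpt j, ← Finset.mul_sum, ← Nat.cast_sum,
        BTree.diverge t hl hn Finset.univ (fun j _ => Finset.mem_univ j) κ l
          (BTree.route_mem g t) (hκmem l) (fun h => hlκ h.symm)]
      simp
  -- every leaf's value is bounded by the routed leaf's value
  have hC : ∀ k l, (∑ j : Fin (K - 1), F k l j) ≤ if l = κ then 0 else π l := by
    intro k l
    by_cases hlκ : l = κ
    · rw [if_pos hlκ, hlκ]
      exact le_of_eq (hB0 k)
    · rw [if_neg hlκ]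
      have hpt : ∀ j, F k l j ≤ π l * ((t.Pmat k j * (if t.Nmat l j = 1 then 1 else 0)
          + t.Nmat k j * (if t.Pmat l j = 1 then 1 else 0) : ℕ) : ℝ) := by
        intro j
        simp only [hF]
        have hind1 : ind (0 < g j) ≤ 1 := by simp [ind]; split <;> norm_num
        have hind2 : ind (g j ≤ 0) ≤ 1 := by simp [ind]; split <;> norm_num
        have hind1' : 0 ≤ ind (0 < g j) := by simp [ind]; split <;> norm_num
        have hind2' : 0 ≤ ind (g j ≤ 0) := by simp [ind]; split <;> norm_num
        have e1 : (t.Pmat k j : ℝ) * ind (0 < g j) * (if t.Nmat l j = 1 then π l else 0)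
            ≤ π l * ((t.Pmat k j * (if t.Nmat l j = 1 then 1 else 0) : ℕ) : ℝ) := by
          by_cases hq : t.Nmat l j = 1
          · simp only [hq, if_pos]
            push_cast
            calc (t.Pmat k j : ℝ) * ind (0 < g j) * π l
                ≤ (t.Pmat k j : ℝ) * 1 * π l := by
                  apply mul_le_mul_of_nonneg_right _ (hπ l)
                  exact mul_le_mul_of_nonneg_left hind1 (Nat.cast_nonneg _)
              _ = π l * ((t.Pmat k j : ℝ) * 1) := by ring
          · simp [hq]
        have e2 : (t.Nmat k j : ℝ) * ind (g j ≤ 0) * (if t.Pmat l j = 1 then π l else 0)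
            ≤ π l * ((t.Nmat k j * (if t.Pmat l j = 1 then 1 else 0) : ℕ) : ℝ) := by
          by_cases hq : t.Pmat l j = 1
          · simp only [hq, if_pos]
            push_cast
            calc (t.Nmat k j : ℝ) * ind (g j ≤ 0) * π l
                ≤ (t.Nmat k j : ℝ) * 1 * π l := by
                  apply mul_le_mul_of_nonneg_right _ (hπ l)
                  exact mul_le_mul_of_nonneg_left hind2 (Nat.cast_nonneg _)
              _ = π l * ((t.Nmat k j : ℝ) * 1) := by ring
          · simp [hq]
        calc F k l j ≤ π l * ((t.Pmat k j * (if t.Nmat l j = 1 then 1 else 0) : ℕ) : ℝ)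
              + π l * ((t.Nmat k j * (if t.Pmat l j = 1 then 1 else 0) : ℕ) : ℝ) :=
            add_le_add e1 e2
          _ = _ := by push_cast; ring
      calc (∑ j : Fin (K - 1), F k l j)
          ≤ ∑ j : Fin (K - 1), π l * ((t.Pmat k j * (if t.Nmat l j = 1 then 1 else 0)
              + t.Nmat k j * (if t.Pmat l j = 1 then 1 else 0) : ℕ) : ℝ) :=
            Finset.sum_le_sum fun j _ => hpt j
        _ = π l * ((∑ j : Fin (K - 1), (t.Pmat k j * (if t.Nmat l j = 1 then 1 else 0)
              + t.Nmat k j * (if t.Pmat l j = 1 then 1 else 0)) : ℕ) : ℝ) := by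
            rw [← Finset.mul_sum, ← Nat.cast_sum]
        _ ≤ π l := by
            by_cases hkl : k = l
            · have hz : (∑ j : Fin (K - 1), (t.Pmat k j * (if t.Nmat l j = 1 then 1 else 0)
                  + t.Nmat k j * (if t.Pmat l j = 1 then 1 else 0)) : ℕ) = 0 := by
                refine Finset.sum_eq_zero fun j _ => ?_
                rw [← hkl]
                have hPN := BTree.Pmat_mul_Nmat t hn k j
                rcases Nat.mul_eq_zero.1 hPN with h | h <;> simp [h]
              rw [hz]
              simpa using hπ l
            · rw [BTree.diverge t hl hn Finset.univ (fun j _ => Finset.mem_univ j) k l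
                (hκmem k) (hκmem l) hkl]
              simp
  -- compute the supremum
  have hsup : (Finset.univ.sup' T.univ_nonempty
      (fun k => ∑ j : Fin (K - 1),
        (wp T π k j * ind (0 < g j) + wn T π k j * ind (g j ≤ 0))))
      = ∑ l : Fin K, (if l = κ then 0 else π l) := by
    apply le_antisymm
    · refine Finset.sup'_le _ _ fun k _ => ?_
      rw [hS k]
      exact Finset.sum_le_sum fun l _ => hC k l
    · have := Finset.le_sup' (f := fun k => ∑ j : Fin (K - 1),
        (wp T π k j * ind (0 < g j) + wn T π k j * ind (g j ≤ 0)))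
        (Finset.mem_univ κ)
      refine le_trans (le_of_eq ?_) this
      rw [hS κ]
      exact (Finset.sum_congr rfl fun l _ => hB l).symm
  rw [hsup]
  have hsum : ∑ l : Fin K, (if l = κ then 0 else π l) = (∑ l : Fin K, π l) - π κ := by
    have : ∀ l : Fin K, (if l = κ then 0 else π l) = π l - (if l = κ then π l else 0) := by
      intro l
      by_cases h : l = κ <;> simp [h]
    rw [Finset.sum_congr rfl fun l _ => this l, Finset.sum_sub_distrib,
      Finset.sum_ite_eq' Finset.univ κ π, if_pos (Finset.mem_univ κ)]
  rw [hsum]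
  have hlhs : ∑ k : Fin K, (Rmax - π k) * leafState T g k = Rmax - π κ := by
    simp only [hG, mul_ite, mul_one, mul_zero]
    rw [Finset.sum_ite_eq' Finset.univ κ (fun k => Rmax - π k)]
    simp
  rw [hlhs]
  ring
end

section
/- Let T be a sensor tree on K leaves with path matrices P, N, let R_max ∈ ℝ, let π_1,…,π_K ≥ 0, and define the weight vectors w_{p,k}, w_{n,k} ∈ ℝ^{K−1} by (w_{p,k})_j = P_{k,j}·Σ_{l : N_{l,j}=1} π_l and (w_{n,k})_j = N_{k,j}·Σ_{l : P_{l,j}=1} π_l. Let φ : ℝ → ℝ satisfy φ(z) ≥ 0 for all z and φ(z) ≥ 1 for all z ≥ 0 (so that φ(g) ≥ 𝟙_{g>0} and φ(−g) ≥ 𝟙_{g≤0} for every real g). Then for all real decision values g = (g_1,…,g_{K−1}), the empirical tree risk Σ_{k=1}^{K} (R_max − π_k)·G_k(g) is at most the surrogate risk R_max − Σ_{k=1}^{K} π_k + max_{k ∈ {1,…,K}} [ Σ_{j=1}^{K−1} (w_{p,k})_j·φ(g_j) + (w_{n,k})_j·φ(−g_j) ]. -/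
namespace BTree
variable {L I : Type} [DecidableEq L] [DecidableEq I]

theorem add_ne_zero_right {a b : ℕ} (h : b ≠ 0) : a + b ≠ 0 :=
  fun h' => h (Nat.eq_zero_of_add_eq_zero_left h')

theorem pmat_eq_zero_of_not_mem (t : BTree L I) (k : L) {j : I} (hj : j ∉ t.nodes) :
    t.Pmat k j = 0 ∧ t.Nmat k j = 0 := by
  induction t with
  | leaf k' => simp [Pmat, Nmat]
  | node j' t₁ t₂ ih₁ ih₂ =>
      simp only [nodes, List.mem_cons, List.mem_append] at hj
      push_neg at hj
      obtain ⟨hj0, hj1, hj2⟩ := hj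
      obtain ⟨p1, n1⟩ := ih₁ hj1
      obtain ⟨p2, n2⟩ := ih₂ hj2
      constructor <;> simp [Pmat, Nmat, p1, p2, n1, n2, hj0]

theorem pmat_add_nmat_le_one (t : BTree L I) (hnd : t.nodes.Nodup) (k : L) (j : I) :
    t.Pmat k j + t.Nmat k j ≤ 1 := by
  induction t with
  | leaf k' => simp [Pmat, Nmat]
  | node j' t₁ t₂ ih₁ ih₂ =>
      rw [nodes, List.nodup_cons, List.nodup_append] at hnd
      obtain ⟨hj', hnd1, hnd2, _⟩ := hnd
      simp only [List.mem_append] at hj'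
      push_neg at hj'
      simp only [Pmat, Nmat]
      by_cases h2 : k ∈ t₂.leaves
      · simp only [if_pos h2]
        by_cases hj : j = j'
        · subst hj
          obtain ⟨p2, n2⟩ := pmat_eq_zero_of_not_mem t₂ k hj'.2
          simp [p2, n2]
        · simp only [if_neg hj]; simpa using ih₂ hnd2
      · simp only [if_neg h2]
        by_cases h1 : k ∈ t₁.leaves
        · simp only [if_pos h1]
          by_cases hj : j = j'
          · subst hj
            obtain ⟨p1, n1⟩ := pmat_eq_zero_of_not_mem t₁ k hj'.1
            simp [p1, n1]
          · simp only [if_neg hj]; simpa using ih₁ hnd1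
        · simp [h1]

theorem exists_routed (t : BTree L I) (hnd : t.leaves.Nodup) (g : I → ℝ) :
    ∃ k ∈ t.leaves,
      (∀ j, t.Pmat k j ≠ 0 → 0 < g j) ∧ (∀ j, t.Nmat k j ≠ 0 → g j ≤ 0) ∧
      (∀ l ∈ t.leaves, l ≠ k →
        ∃ j, (t.Pmat k j ≠ 0 ∧ t.Nmat l j ≠ 0) ∨ (t.Nmat k j ≠ 0 ∧ t.Pmat l j ≠ 0)) := by
  induction t with
  | leaf k =>
      refine ⟨k, by simp [leaves], ?_, ?_, ?_⟩
      · intro j h; simp [Pmat] at h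
      · intro j h; simp [Nmat] at h
      · intro l hl hne; simp [leaves] at hl; exact absurd hl hne
  | node j t₁ t₂ ih₁ ih₂ =>
      rw [leaves, List.nodup_append] at hnd
      obtain ⟨hnd1, hnd2, hdisj⟩ := hnd
      by_cases hg : 0 < g j
      · obtain ⟨k, hk, hP, hN, hdiv⟩ := ih₂ hnd2
        refine ⟨k, by simp [leaves, hk], ?_, ?_, ?_⟩
        · intro j' h
          simp only [Pmat, if_pos hk] at h
          by_cases hj : j' = j
          · rwa [hj]
          · exact hP j' (by simpa [hj] using h)
        · intro j' h
          simp only [Nmat, if_pos hk] at h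
          exact hN j' h
        · intro l hl hne
          by_cases hl2 : l ∈ t₂.leaves
          · obtain ⟨j', hj'⟩ := hdiv l hl2 hne
            refine ⟨j', ?_⟩
            rcases hj' with ⟨h1, h2⟩ | ⟨h1, h2⟩
            · exact Or.inl ⟨by simp only [Pmat, if_pos hk]; exact add_ne_zero_right h1,
                by simp only [Nmat, if_pos hl2]; exact h2⟩
            · exact Or.inr ⟨by simp only [Nmat, if_pos hk]; exact h1,
                by simp only [Pmat, if_pos hl2]; exact add_ne_zero_right h2⟩
          · have hl1 : l ∈ t₁.leaves := by
              simp [leaves] at hl; tauto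
            refine ⟨j, Or.inl ⟨?_, ?_⟩⟩
            · simp [Pmat, hk]
            · simp [Nmat, hl2, hl1]
      · obtain ⟨k, hk, hP, hN, hdiv⟩ := ih₁ hnd1
        have hk2 : k ∉ t₂.leaves := fun h => hdisj k hk k h rfl
        refine ⟨k, by simp [leaves, hk], ?_, ?_, ?_⟩
        · intro j' h
          simp only [Pmat, if_neg hk2, if_pos hk] at h
          exact hP j' h
        · intro j' h
          simp only [Nmat, if_neg hk2, if_pos hk] at h
          by_cases hj : j' = j
          · rw [hj]; linarith [not_lt.mp hg]
          · exact hN j' (by simpa [hj] using h)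
        · intro l hl hne
          by_cases hl2 : l ∈ t₂.leaves
          · refine ⟨j, Or.inr ⟨?_, ?_⟩⟩
            · simp [Nmat, hk2, hk]
            · simp [Pmat, hl2]
          · have hl1 : l ∈ t₁.leaves := by simp [leaves] at hl; tauto
            obtain ⟨j', hj'⟩ := hdiv l hl1 hne
            refine ⟨j', ?_⟩
            rcases hj' with ⟨h1, h2⟩ | ⟨h1, h2⟩
            · exact Or.inl ⟨by simp only [Pmat, if_neg hk2, if_pos hk]; exact h1,
                by simp only [Nmat, if_neg hl2, if_pos hl1]; exact add_ne_zero_right h2⟩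
            · exact Or.inr ⟨by simp only [Nmat, if_neg hk2, if_pos hk]; exact add_ne_zero_right h1,
                by simp only [Pmat, if_neg hl2, if_pos hl1]; exact h2⟩
end BTree

/-- If `φ` is nonnegative and satisfies `φ(z) ≥ 1` for all `z ≥ 0` (so that
`φ(g) ≥ 𝟙_{g>0}` and `φ(−g) ≥ 𝟙_{g≤0}`), then the empirical tree risk is at most the
surrogate risk obtained by replacing each indicator with `φ`. -/
theorem tree_risk_le_surrogate {K : ℕ} (T : SensorTree K) (Rmax : ℝ) (π : Fin K → ℝ)
    (hπ : ∀ k, 0 ≤ π k) (φ : ℝ → ℝ) (hφ0 : ∀ z, 0 ≤ φ z) (hφ1 : ∀ z, 0 ≤ z → 1 ≤ φ z)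
    (g : Fin (K - 1) → ℝ) :
    ∑ k : Fin K, (Rmax - π k) * leafState T g k
      ≤ Rmax - ∑ k : Fin K, π k
        + Finset.univ.sup' T.univ_nonempty
            (fun k => ∑ j : Fin (K - 1),
              (wp T π k j * φ (g j) + wn T π k j * φ (-(g j)))) := by

  classical
  obtain ⟨k₀, -, hP, hN, hdiv⟩ := T.tree.exists_routed T.leaves_nodup g
  have hle1 : ∀ (k : Fin K) (j : Fin (K-1)), T.tree.Pmat k j + T.tree.Nmat k j ≤ 1 :=
    fun k j => BTree.pmat_add_nmat_le_one _ T.nodes_nodup k j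
  have hGk : leafState T g k₀ = 1 := by
    unfold leafState
    apply Finset.prod_eq_one
    intro j _
    have h1 : ind (0 < g j) ^ (T.tree.Pmat k₀ j) = 1 := by
      rcases eq_or_ne (T.tree.Pmat k₀ j) 0 with h | h
      · rw [h, pow_zero]
      · rw [show ind (0 < g j) = 1 from if_pos (hP j h), one_pow]
    have h2 : ind (g j ≤ 0) ^ (T.tree.Nmat k₀ j) = 1 := by
      rcases eq_or_ne (T.tree.Nmat k₀ j) 0 with h | h
      · rw [h, pow_zero]
      · rw [show ind (g j ≤ 0) = 1 from if_pos (hN j h), one_pow]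
    rw [h1, h2, mul_one]
  have hG0 : ∀ l, l ≠ k₀ → leafState T g l = 0 := by
    intro l hl
    obtain ⟨j, hj⟩ := hdiv l (T.leaves_complete l) hl
    unfold leafState
    apply Finset.prod_eq_zero (Finset.mem_univ j)
    rcases hj with ⟨hpk, hnl⟩ | ⟨hnk, hpl⟩
    · rw [show ind (g j ≤ 0) = 0 from if_neg (not_le.2 (hP j hpk)), zero_pow hnl, mul_zero]
    · rw [show ind (0 < g j) = 0 from if_neg (not_lt.2 (hN j hnk)), zero_pow hpl, zero_mul]
  have hsum : ∑ k : Fin K, (Rmax - π k) * leafState T g k = Rmax - π k₀ := by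
    rw [Finset.sum_eq_single k₀]
    · rw [hGk, mul_one]
    · intro b _ hb; rw [hG0 b hb, mul_zero]
    · intro h; exact absurd (Finset.mem_univ k₀) h
  set a : Fin K → Fin (K-1) → ℝ :=
    fun l j => if T.tree.Pmat k₀ j ≠ 0 ∧ T.tree.Nmat l j = 1 then π l else 0 with ha
  set b : Fin K → Fin (K-1) → ℝ :=
    fun l j => if T.tree.Nmat k₀ j ≠ 0 ∧ T.tree.Pmat l j = 1 then π l else 0 with hb
  have hanb : ∀ l j, 0 ≤ a l j ∧ 0 ≤ b l j := by
    intro l j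
    refine ⟨?_, ?_⟩ <;> simp only [ha, hb] <;> split <;> first | exact hπ l | exact le_rfl
  have key : ∀ l ∈ Finset.univ.erase k₀, π l ≤ ∑ j : Fin (K-1), (a l j + b l j) := by
    intro l hl
    obtain ⟨j₀, hj⟩ := hdiv l (T.leaves_complete l) (Finset.ne_of_mem_erase hl)
    have hab : π l ≤ a l j₀ + b l j₀ := by
      rcases hj with ⟨h1, h2⟩ | ⟨h1, h2⟩
      · have : a l j₀ = π l := by
          simp only [ha]
          rw [if_pos ⟨h1, by have := hle1 l j₀; omega⟩]
        rw [this]; linarith [(hanb l j₀).2]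
      · have : b l j₀ = π l := by
          simp only [hb]
          rw [if_pos ⟨h1, by have := hle1 l j₀; omega⟩]
        rw [this]; linarith [(hanb l j₀).1]
    calc π l ≤ a l j₀ + b l j₀ := hab
      _ ≤ ∑ j : Fin (K-1), (a l j + b l j) :=
        Finset.single_le_sum (f := fun j => a l j + b l j)
          (fun j _ => add_nonneg (hanb l j).1 (hanb l j).2) (Finset.mem_univ j₀)
  have hA : ∑ l : Fin K, π l - π k₀
      ≤ ∑ j : Fin (K-1), (wp T π k₀ j * φ (g j) + wn T π k₀ j * φ (-(g j))) := by
    have e1 : ∑ l : Fin K, π l - π k₀ = ∑ l ∈ Finset.univ.erase k₀, π l := by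
      rw [← Finset.add_sum_erase _ _ (Finset.mem_univ k₀)]; ring
    rw [e1]
    calc ∑ l ∈ Finset.univ.erase k₀, π l
        ≤ ∑ l ∈ Finset.univ.erase k₀, ∑ j : Fin (K-1), (a l j + b l j) :=
          Finset.sum_le_sum key
      _ ≤ ∑ l : Fin K, ∑ j : Fin (K-1), (a l j + b l j) := by
          apply Finset.sum_le_sum_of_subset_of_nonneg (Finset.erase_subset _ _)
          intro l _ _
          exact Finset.sum_nonneg fun j _ => by linarith [(hanb l j).1, (hanb l j).2]
      _ = ∑ j : Fin (K-1), ∑ l : Fin K, (a l j + b l j) := Finset.sum_comm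
      _ ≤ ∑ j : Fin (K-1), (wp T π k₀ j * φ (g j) + wn T π k₀ j * φ (-(g j))) := by
          apply Finset.sum_le_sum
          intro j _
          rw [Finset.sum_add_distrib]
          have hwpa : ∑ l : Fin K, a l j ≤ wp T π k₀ j * φ (g j) := by
            rcases eq_or_ne (T.tree.Pmat k₀ j) 0 with h | h
            · have : ∀ l : Fin K, a l j = 0 := by
                intro l; simp only [ha]; rw [if_neg (by tauto)]
              simp [this, wp, h]
            · have hsa : ∑ l : Fin K, a l j
                  = ∑ l ∈ Finset.univ.filter (fun l => T.tree.Nmat l j = 1), π l := by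
                rw [Finset.sum_filter]
                apply Finset.sum_congr rfl
                intro l _
                simp only [ha]
                by_cases hc : T.tree.Nmat l j = 1 <;> simp [hc, h]
              rw [hsa]
              have hS : 0 ≤ ∑ l ∈ Finset.univ.filter (fun l => T.tree.Nmat l j = 1), π l :=
                Finset.sum_nonneg fun l _ => hπ l
              have hPc : (1:ℝ) ≤ (T.tree.Pmat k₀ j : ℝ) := by
                exact_mod_cast Nat.one_le_iff_ne_zero.2 h
              have hφ : (1:ℝ) ≤ φ (g j) := hφ1 _ (le_of_lt (hP j h))
              unfold wp
              have h1 := le_mul_of_one_le_left hS hPc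
              have h2 := le_mul_of_one_le_right
                (mul_nonneg (le_trans zero_le_one hPc) hS) hφ
              linarith
          have hwnb : ∑ l : Fin K, b l j ≤ wn T π k₀ j * φ (-(g j)) := by
            rcases eq_or_ne (T.tree.Nmat k₀ j) 0 with h | h
            · have : ∀ l : Fin K, b l j = 0 := by
                intro l; simp only [hb]; rw [if_neg (by tauto)]
              simp [this, wn, h]
            · have hsb : ∑ l : Fin K, b l j
                  = ∑ l ∈ Finset.univ.filter (fun l => T.tree.Pmat l j = 1), π l := by
                rw [Finset.sum_filter]
                apply Finset.sum_congr rfl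
                intro l _
                simp only [hb]
                by_cases hc : T.tree.Pmat l j = 1 <;> simp [hc, h]
              rw [hsb]
              have hS : 0 ≤ ∑ l ∈ Finset.univ.filter (fun l => T.tree.Pmat l j = 1), π l :=
                Finset.sum_nonneg fun l _ => hπ l
              have hNc : (1:ℝ) ≤ (T.tree.Nmat k₀ j : ℝ) := by
                exact_mod_cast Nat.one_le_iff_ne_zero.2 h
              have hφ : (1:ℝ) ≤ φ (-(g j)) := hφ1 _ (by linarith [hN j h])
              unfold wn
              have h1 := le_mul_of_one_le_left hS hNc
              have h2 := le_mul_of_one_le_right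
                (mul_nonneg (le_trans zero_le_one hNc) hS) hφ
              linarith
          linarith
  have hsup : ∑ j : Fin (K-1), (wp T π k₀ j * φ (g j) + wn T π k₀ j * φ (-(g j)))
      ≤ Finset.univ.sup' T.univ_nonempty
          (fun k => ∑ j : Fin (K-1), (wp T π k j * φ (g j) + wn T π k j * φ (-(g j)))) :=
    Finset.le_sup'
      (fun k => ∑ j : Fin (K-1), (wp T π k j * φ (g j) + wn T π k j * φ (-(g j))))
      (Finset.mem_univ k₀)
  rw [hsum]
  linarith
end
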